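/- arXiv:math/0703373 — 6 statements merged into one kernel-verified Lean document; each statement's English description precedes it below -/
import Mathlib

section
/- Let n ≥ 1 and let α be a real number with 0 < α ≤ 1. The complex roots of the polynomial (1+s)^n − (1−α)s^n are exactly the n numbers γ_k = −1/(1 − (1−α)^{1/n} e^{2πik/n}) for k = 0, 1, …, n−1 (where (1−α)^{1/n} denotes the nonnegative real n-th root), and every such root satisfies Re(γ_k) ≤ 0. Moreover the root of smallest real part is γ_0 = −1/(1 − (1−α)^{1/n}). -/
open Finset

private lemma re_formula (β θ : ℝ) :
    ((-1 : ℂ) / (1 - (β : ℂ) * Complex.exp ((θ : ℂ) * Complex.I))).re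
      = -(1 - β * Real.cos θ) / (1 - 2 * β * Real.cos θ + β ^ 2) := by
  have h1 : ((1 : ℂ) - (β : ℂ) * Complex.exp ((θ : ℂ) * Complex.I)).re
      = 1 - β * Real.cos θ := by
    simp [Complex.sub_re, Complex.mul_re, Complex.exp_ofReal_mul_I_re,
      Complex.exp_ofReal_mul_I_im]
  have h2 : ((1 : ℂ) - (β : ℂ) * Complex.exp ((θ : ℂ) * Complex.I)).im
      = -(β * Real.sin θ) := by
    simp [Complex.sub_im, Complex.mul_im, Complex.exp_ofReal_mul_I_re,
      Complex.exp_ofReal_mul_I_im]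
  have h3 : Complex.normSq (1 - (β : ℂ) * Complex.exp ((θ : ℂ) * Complex.I))
      = 1 - 2 * β * Real.cos θ + β ^ 2 := by
    rw [Complex.normSq_apply, h1, h2]
    nlinarith [Real.sin_sq_add_cos_sq θ]
  rw [Complex.div_re, h1, h2, h3]
  simp only [Complex.neg_re, Complex.one_re, Complex.neg_im, Complex.one_im, neg_zero,
    zero_mul, zero_div, add_zero]
  ring

private lemma cap_denom_pos (β c : ℝ) (hβ0 : 0 ≤ β) (hβ1 : β < 1) (hc1 : c ≤ 1) :
    0 < 1 - 2 * β * c + β ^ 2 := by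
  nlinarith [sq_nonneg (1 - β), mul_nonneg hβ0 (by linarith : (0:ℝ) ≤ 1 - c)]

private lemma cap_ineq1 (β c : ℝ) (hβ0 : 0 ≤ β) (hβ1 : β < 1) (hc1 : c ≤ 1) :
    -(1 - β * c) / (1 - 2 * β * c + β ^ 2) ≤ 0 := by
  have hD := cap_denom_pos β c hβ0 hβ1 hc1
  have hnum : 0 ≤ 1 - β * c := by nlinarith
  have := div_nonneg hnum hD.le
  linarith [neg_div (1 - 2 * β * c + β ^ 2) (1 - β * c), this]

private lemma cap_ineq2 (β c : ℝ) (hβ0 : 0 ≤ β) (hβ1 : β < 1) (hc1 : c ≤ 1) :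
    -(1 - β) / (1 - 2 * β + β ^ 2) ≤ -(1 - β * c) / (1 - 2 * β * c + β ^ 2) := by
  have hD := cap_denom_pos β c hβ0 hβ1 hc1
  have hD0 : (0:ℝ) < 1 - 2 * β + β ^ 2 := by nlinarith [sq_nonneg (1 - β)]
  rw [div_le_div_iff₀ hD0 hD]
  nlinarith [mul_nonneg (mul_nonneg (mul_nonneg hβ0 (by linarith : (0:ℝ) ≤ 1 + β))
    (by linarith : (0:ℝ) ≤ 1 - c)) (by linarith : (0:ℝ) ≤ 1 - β)]

/-- For `n ≥ 1` and `0 < α ≤ 1`, the complex roots of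
`(1+s)^n − (1−α) s^n` are exactly the `n` numbers
`γ k = −1 / (1 − (1−α)^{1/n} e^{2πik/n})`, `k = 0, …, n−1`; every such root has
non-positive real part, and the root of smallest real part is `γ 0`. -/
theorem roots_of_cap_body_polynomial
    (n : ℕ) (hn : 1 ≤ n) (α : ℝ) (hα : 0 < α) (hα1 : α ≤ 1)
    (γ : ℕ → ℂ)
    (hγ : ∀ k : ℕ, γ k =
      -1 / (1 - (((1 - α) ^ ((1 : ℝ) / n) : ℝ) : ℂ) *
        Complex.exp (2 * Real.pi * k / n * Complex.I))) :
    ({s : ℂ | (1 + s) ^ n - ((1 : ℂ) - α) * s ^ n = 0} = {s : ℂ | ∃ k < n, s = γ k}) ∧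
    (∀ k < n, (γ k).re ≤ 0) ∧
    (∀ k < n, (γ 0).re ≤ (γ k).re) := by
  have hnne : n ≠ 0 := by omega
  haveI : NeZero n := ⟨hnne⟩
  have hnR : (n : ℝ) ≠ 0 := Nat.cast_ne_zero.mpr hnne
  have hnC : (n : ℂ) ≠ 0 := Nat.cast_ne_zero.mpr hnne
  set β : ℝ := (1 - α) ^ ((1 : ℝ) / n) with hβdef
  have h1α0 : (0:ℝ) ≤ 1 - α := by linarith
  have hβ0 : 0 ≤ β := Real.rpow_nonneg h1α0 _
  have hβ1 : β < 1 := Real.rpow_lt_one h1α0 (by linarith) (by positivity)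
  have hβn : β ^ n = 1 - α := by
    rw [hβdef, ← Real.rpow_natCast ((1 - α) ^ ((1:ℝ) / n)) n, ← Real.rpow_mul h1α0,
      one_div, inv_mul_cancel₀ hnR, Real.rpow_one]
  have hβnC : ((β : ℂ)) ^ n = 1 - (α : ℂ) := by
    have h := congrArg (Complex.ofReal) hβn
    push_cast at h
    exact h
  set θ : ℕ → ℝ := fun k => 2 * Real.pi * k / n with hθdef
  have hexp : ∀ k : ℕ,
      Complex.exp (2 * Real.pi * k / n * Complex.I)
        = Complex.exp ((θ k : ℝ) * Complex.I) := by
    intro k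
    congr 1
    push_cast [hθdef]
    ring
  have hγ' : ∀ k : ℕ, γ k = -1 / (1 - (β : ℂ) * Complex.exp ((θ k : ℝ) * Complex.I)) := by
    intro k
    rw [hγ k, hexp k]
  have hw : ∀ k : ℕ, (1 : ℂ) - (β : ℂ) * Complex.exp ((θ k : ℝ) * Complex.I) ≠ 0 := by
    intro k h
    have h2 : (β : ℂ) * Complex.exp ((θ k : ℝ) * Complex.I) = 1 := by
      linear_combination -h
    have h3 := congrArg (fun z : ℂ => ‖z‖) h2
    simp [norm_mul, Complex.norm_real, abs_of_nonneg hβ0,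
      Complex.norm_exp_ofReal_mul_I] at h3
    linarith
  have he : ∀ k : ℕ, Complex.exp ((θ k : ℝ) * Complex.I) ^ n = 1 := by
    intro k
    rw [← Complex.exp_nat_mul]
    have harg : (n : ℂ) * ((θ k : ℝ) * Complex.I) = (k : ℂ) * (2 * Real.pi * Complex.I) := by
      push_cast [hθdef]
      field_simp
    rw [harg]
    exact_mod_cast Complex.exp_int_mul_two_pi_mul_I (k : ℤ)
  have hkey : ∀ k : ℕ, 1 + γ k = (β : ℂ) * Complex.exp ((θ k : ℝ) * Complex.I) * γ k := by
    intro k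
    rw [hγ' k]
    field_simp [hw k]
    ring
  have hroot : ∀ k : ℕ, (1 + γ k) ^ n - ((1 : ℂ) - α) * (γ k) ^ n = 0 := by
    intro k
    rw [hkey k, mul_pow, mul_pow, hβnC, he k]
    ring
  refine ⟨?_, ?_, ?_⟩
  · ext s
    simp only [Set.mem_setOf_eq]
    constructor
    · intro hs
      have hs0 : s ≠ 0 := by
        intro h
        rw [h] at hs
        simp [zero_pow hnne] at hs
      have hsr : (1 + s) ^ n = ((β : ℂ) * s) ^ n := by
        rw [mul_pow, hβnC]
        linear_combination hs
      by_cases hb : (β : ℂ) = 0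
      · refine ⟨0, by omega, ?_⟩
        have h1s : (1 + s) ^ n = 0 := by rw [hsr, hb]; simp [zero_pow hnne]
        have : 1 + s = 0 := pow_eq_zero_iff hnne |>.mp h1s
        rw [hγ' 0, hb]
        simp
        linear_combination this
      · have hbs : (β : ℂ) * s ≠ 0 := mul_ne_zero hb hs0
        have hz : ((1 + s) / ((β : ℂ) * s)) ^ n = 1 := by
          rw [div_pow, hsr, div_self (pow_ne_zero _ hbs)]
        obtain ⟨k, hk, hke⟩ :=
          (Complex.isPrimitiveRoot_exp n hnne).eq_pow_of_pow_eq_one hz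
        refine ⟨k, hk, ?_⟩
        have hke2 : Complex.exp ((θ k : ℝ) * Complex.I) * ((β : ℂ) * s) = 1 + s := by
          have h4 : Complex.exp (2 * Real.pi * Complex.I / n) ^ k
              = Complex.exp ((θ k : ℝ) * Complex.I) := by
            rw [← Complex.exp_nat_mul]
            congr 1
            push_cast [hθdef]
            field_simp
          rw [h4] at hke
          rw [hke, div_mul_cancel₀ _ hbs]
        rw [hγ' k, eq_div_iff (hw k)]
        linear_combination -hke2
    · rintro ⟨k, _, rfl⟩
      exact hroot k
  · intro k _
    rw [hγ' k, re_formula β (θ k)]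
    exact cap_ineq1 β (Real.cos (θ k)) hβ0 hβ1 (Real.cos_le_one _)
  · intro k _
    have h0 : θ 0 = 0 := by simp [hθdef]
    have hre0 : (γ 0).re = -(1 - β) / (1 - 2 * β + β ^ 2) := by
      rw [hγ' 0, re_formula β (θ 0), h0]
      simp
    rw [hre0, hγ' k, re_formula β (θ k)]
    exact cap_ineq2 β (Real.cos (θ k)) hβ0 hβ1 (Real.cos_le_one _)
end

section
/- Let K be a convex body in ℝⁿ and let E be a convex body in ℝⁿ with nonempty interior, and let γ_1, …, γ_n be the complex roots (counted with multiplicity) of the relative Steiner polynomial f(K,E,s). Then |Re(γ_1)| + ⋯ + |Re(γ_n)| ≥ n·r(K;E). -/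
open scoped Pointwise
open MeasureTheory Finset

open Polynomial Filter in
private lemma aux_coeff_nonneg (S : Polynomial ℝ)
    (h : ∀ᶠ ρ : ℝ in atTop, 0 ≤ S.eval ρ) {m : ℕ} (hm : S.natDegree ≤ m) :
    0 ≤ S.coeff m := by
  rcases lt_or_eq_of_le hm with hlt | rfl
  · rw [S.coeff_eq_zero_of_natDegree_lt hlt]
  by_contra hneg
  push_neg at hneg
  rcases le_or_gt S.degree 0 with hdeg | hdeg
  · obtain ⟨ρ, hρ⟩ := h.exists
    rw [Polynomial.eq_C_of_degree_le_zero hdeg, eval_C] at hρ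
    have h0 : S.natDegree = 0 :=
      Nat.le_zero.mp (Polynomial.natDegree_le_iff_degree_le.mpr (by exact_mod_cast hdeg))
    rw [h0] at hneg
    linarith
  · have htb := S.tendsto_atBot_of_leadingCoeff_nonpos hdeg
      (by rw [← Polynomial.coeff_natDegree]; exact hneg.le)
    obtain ⟨ρ, hρ, hρ'⟩ := (h.and (htb.eventually (eventually_le_atBot (-1)))).exists
    linarith

/-- If `γ 1, …, γ n` are the complex roots, with multiplicity, of the
relative Steiner polynomial `f(K,E,s)` of a convex body `K` relative to a convex body `E`
with nonempty interior, then `|Re γ 1| + ⋯ + |Re γ n| ≥ n · r(K;E)`. -/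
theorem steiner_roots_sum_re_ge_inradius
    {n : ℕ}
    (K E : Set (EuclideanSpace ℝ (Fin n)))
    (hKconv : Convex ℝ K) (hKcomp : IsCompact K) (hKne : K.Nonempty)
    (hEconv : Convex ℝ E) (hEcomp : IsCompact E) (hEne : E.Nonempty)
    (hEint : (interior E).Nonempty)
    (W : ℕ → ℝ)
    (hW : ∀ ρ : ℝ, 0 ≤ ρ →
      volume (K + ρ • E) =
        ENNReal.ofReal (∑ i ∈ Finset.range (n + 1), (n.choose i : ℝ) * W i * ρ ^ i))
    (γ : Fin n → ℂ)
    (hfact : ∀ s : ℂ, (∑ i ∈ Finset.range (n + 1), (n.choose i : ℂ) * (W i : ℂ) * s ^ i) =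
      (W n : ℂ) * ∏ i : Fin n, (s - γ i))
    (rKE : ℝ)
    (hr : IsGreatest {r : ℝ | 0 ≤ r ∧ ∃ x : EuclideanSpace ℝ (Fin n), x +ᵥ r • E ⊆ K} rKE) :
    n * rKE ≤ ∑ i : Fin n, |(γ i).re| := by
  classical
  obtain ⟨⟨hr0, x, hxK⟩, -⟩ := hr
  rcases Nat.eq_zero_or_pos n with rfl | hn
  · simp
  -- the volume of E
  have hEfin : volume E ≠ ⊤ := hEcomp.measure_lt_top.ne
  set V : ℝ := (volume E).toReal with hVdef
  have hV0 : 0 < V :=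
    ENNReal.toReal_pos (MeasureTheory.Measure.measure_pos_of_nonempty_interior _ hEint).ne' hEfin
  have hEvol : volume E = ENNReal.ofReal V := (ENNReal.ofReal_toReal hEfin).symm
  have hfin : Module.finrank ℝ (EuclideanSpace ℝ (Fin n)) = n := finrank_euclideanSpace_fin
  set f : ℝ → ℝ := fun ρ => ∑ i ∈ Finset.range (n + 1), (n.choose i : ℝ) * W i * ρ ^ i
    with hfdef
  have hvol_smul : ∀ (c : ℝ), 0 ≤ c → ∀ y : EuclideanSpace ℝ (Fin n),
      volume (y +ᵥ c • E) = ENNReal.ofReal (c ^ n * V) := by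
    intro c hc y
    rw [measure_vadd, MeasureTheory.Measure.addHaar_smul_of_nonneg volume hc, hfin, hEvol,
      ← ENNReal.ofReal_mul (by positivity)]
  -- lower bound
  have hlb : ∀ ρ : ℝ, 0 < ρ → V * (ρ + rKE) ^ n ≤ f ρ := by
    intro ρ hρ
    have hsub : x +ᵥ (rKE + ρ) • E ⊆ K + ρ • E := by
      rw [hEconv.add_smul hr0 hρ.le]
      rintro p ⟨q, hq, rfl⟩
      obtain ⟨a, ha, b, hb, rfl⟩ := hq
      have hmem : x +ᵥ a ∈ K := hxK ⟨a, ha, rfl⟩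
      show x + (a + b) ∈ K + ρ • E
      rw [← add_assoc]
      exact Set.add_mem_add hmem hb
    have hvol := (measure_mono hsub).trans_eq (hW ρ hρ.le)
    rw [hvol_smul _ (by linarith) x] at hvol
    rcases ENNReal.ofReal_le_ofReal_iff'.mp hvol with h | h
    · calc V * (ρ + rKE) ^ n = (rKE + ρ) ^ n * V := by ring_nf
        _ ≤ f ρ := h
    · exfalso
      nlinarith [pow_pos (show (0:ℝ) < rKE + ρ by linarith) n]
  -- upper bound
  obtain ⟨c₀, hc₀⟩ := hEint
  obtain ⟨ε, hε, hball⟩ := Metric.isOpen_iff.mp isOpen_interior c₀ hc₀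
  obtain ⟨M, hM⟩ := hKcomp.isBounded.subset_ball (0 : EuclideanSpace ℝ (Fin n))
  obtain ⟨k, hk⟩ := hKne
  have hM0 : 0 < M := by
    have hkb := hM hk
    rw [Metric.mem_ball] at hkb
    exact lt_of_le_of_lt dist_nonneg hkb
  set R : ℝ := M / ε with hRdef
  have hR : 0 < R := div_pos hM0 hε
  have hKsub : K ⊆ (-(R • c₀)) +ᵥ R • E := by
    intro p hp
    have hpM : ‖p‖ < M := by simpa [Metric.mem_ball] using hM hp
    have heE : c₀ + R⁻¹ • p ∈ E := by
      apply interior_subset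
      apply hball
      have hnorm : ‖R⁻¹ • p‖ < ε := by
        rw [norm_smul, norm_inv, Real.norm_eq_abs, abs_of_pos hR, inv_mul_lt_iff₀ hR]
        have hRe : R * ε = M := div_mul_cancel₀ _ hε.ne'
        rw [hRe]
        exact hpM
      rw [Metric.mem_ball, dist_eq_norm]
      simpa using hnorm
    refine ⟨R • (c₀ + R⁻¹ • p), Set.smul_mem_smul_set heE, ?_⟩
    show -(R • c₀) + R • (c₀ + R⁻¹ • p) = p
    rw [smul_add, smul_smul, mul_inv_cancel₀ hR.ne', one_smul]
    abel
  have hub : ∀ ρ : ℝ, 0 < ρ → f ρ ≤ V * (ρ + R) ^ n := by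
    intro ρ hρ
    have hsub : K + ρ • E ⊆ (-(R • c₀)) +ᵥ (R + ρ) • E := by
      rw [hEconv.add_smul hR.le hρ.le]
      rintro p ⟨a, haK, b, hb, rfl⟩
      obtain ⟨a', ha', rfl⟩ := hKsub haK
      refine ⟨a' + b, Set.add_mem_add ha' hb, ?_⟩
      show -(R • c₀) + (a' + b) = (-(R • c₀) +ᵥ a') + b
      rw [vadd_eq_add]
      abel
    have hvol := ((hW ρ hρ.le).symm.trans_le (measure_mono hsub))
    rw [hvol_smul _ (by linarith) _] at hvol
    have := (ENNReal.ofReal_le_ofReal_iff (by positivity)).mp hvol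
    calc f ρ ≤ (R + ρ) ^ n * V := this
      _ = V * (ρ + R) ^ n := by ring_nf
  -- the polynomial
  set P : Polynomial ℝ :=
    ∑ i ∈ Finset.range (n + 1), Polynomial.C ((n.choose i : ℝ) * W i) * Polynomial.X ^ i
    with hPdef
  have hPeval : ∀ ρ : ℝ, P.eval ρ = f ρ := by
    intro ρ
    rw [hPdef, Polynomial.eval_finset_sum]
    simp [hfdef]
  have hPdeg : P.natDegree ≤ n := by
    apply Polynomial.natDegree_sum_le_of_forall_le
    intro i hi
    calc (Polynomial.C ((n.choose i : ℝ) * W i) * Polynomial.X ^ i).natDegree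
        ≤ _ := Polynomial.natDegree_C_mul_le _ _
      _ ≤ n := by simpa using Nat.lt_succ_iff.mp (Finset.mem_range.mp hi)
  have hPcoeff : ∀ m, m ≤ n → P.coeff m = (n.choose m : ℝ) * W m := by
    intro m hm
    rw [hPdef, Polynomial.finset_sum_coeff]
    rw [Finset.sum_eq_single m]
    · rw [Polynomial.coeff_C_mul, Polynomial.coeff_X_pow, if_pos rfl, mul_one]
    · intro i _ hne
      rw [Polynomial.coeff_C_mul, Polynomial.coeff_X_pow, if_neg (Ne.symm hne), mul_zero]
    · intro h
      exact absurd (Finset.mem_range.mpr (Nat.lt_succ_of_le hm)) h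
  -- Q := P - V (X + r)^n ≥ 0 eventually
  set Q : Polynomial ℝ := P - Polynomial.C V * (Polynomial.X + Polynomial.C rKE) ^ n with hQdefn
  have hbinexp : ∀ (t : ℝ) (m : ℕ),
      (Polynomial.C V * (Polynomial.X + Polynomial.C t) ^ n).coeff m
        = V * (t ^ (n - m) * (n.choose m : ℝ)) := by
    intro t m
    rw [Polynomial.coeff_C_mul, Polynomial.coeff_X_add_C_pow]
  have hCXC_deg : ∀ t : ℝ, (Polynomial.C V * (Polynomial.X + Polynomial.C t) ^ n).natDegree ≤ n := by
    intro t
    calc (Polynomial.C V * (Polynomial.X + Polynomial.C t) ^ n).natDegree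
        ≤ ((Polynomial.X + Polynomial.C t) ^ n).natDegree := Polynomial.natDegree_C_mul_le _ _
      _ ≤ n * (Polynomial.X + Polynomial.C t).natDegree := Polynomial.natDegree_pow_le
      _ ≤ n * 1 := by
          exact Nat.mul_le_mul_left n (by simp [Polynomial.natDegree_X_add_C])
      _ = n := by ring
  have hQdeg : Q.natDegree ≤ n :=
    (Polynomial.natDegree_sub_le _ _).trans (by simp [hPdeg, hCXC_deg rKE])
  have hQev : ∀ᶠ ρ : ℝ in Filter.atTop, 0 ≤ Q.eval ρ := by
    filter_upwards [Filter.eventually_gt_atTop 0] with ρ hρ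
    have := hlb ρ hρ
    simp only [hQdefn, Polynomial.eval_sub, Polynomial.eval_mul, Polynomial.eval_C,
      Polynomial.eval_pow, Polynomial.eval_add, Polynomial.eval_X, hPeval]
    linarith
  -- A := V (X + R)^n - P ≥ 0 eventually
  set A : Polynomial ℝ := Polynomial.C V * (Polynomial.X + Polynomial.C R) ^ n - P with hAdefn
  have hAdeg : A.natDegree ≤ n :=
    (Polynomial.natDegree_sub_le _ _).trans (by simp [hPdeg, hCXC_deg R])
  have hAev : ∀ᶠ ρ : ℝ in Filter.atTop, 0 ≤ A.eval ρ := by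
    filter_upwards [Filter.eventually_gt_atTop 0] with ρ hρ
    have := hub ρ hρ
    simp only [hAdefn, Polynomial.eval_sub, Polynomial.eval_mul, Polynomial.eval_C,
      Polynomial.eval_pow, Polynomial.eval_add, Polynomial.eval_X, hPeval]
    linarith
  -- leading coefficient: W n = V
  have hWnV : W n = V := by
    have h1 : 0 ≤ Q.coeff n := aux_coeff_nonneg Q hQev hQdeg
    have h2 : 0 ≤ A.coeff n := aux_coeff_nonneg A hAev hAdeg
    rw [hQdefn, Polynomial.coeff_sub, hPcoeff n le_rfl, hbinexp] at h1
    rw [hAdefn, Polynomial.coeff_sub, hPcoeff n le_rfl, hbinexp] at h2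
    simp at h1 h2
    linarith
  -- second coefficient
  have hQdeg' : Q.natDegree ≤ n - 1 := by
    rw [Polynomial.natDegree_le_iff_coeff_eq_zero]
    intro m hm
    rcases eq_or_lt_of_le (show n ≤ m by omega) with rfl | hlt
    · rw [hQdefn, Polynomial.coeff_sub, hPcoeff n le_rfl, hbinexp]
      simp [hWnV]
    · exact Polynomial.coeff_eq_zero_of_natDegree_lt (lt_of_le_of_lt hQdeg hlt)
  have hcoeffQ : 0 ≤ Q.coeff (n - 1) := aux_coeff_nonneg Q hQev hQdeg'
  have hchoose : (n.choose (n - 1)) = n := by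
    rw [Nat.choose_symm (by omega : 1 ≤ n), Nat.choose_one_right]
  have hkey : V * rKE * n ≤ (n : ℝ) * W (n - 1) := by
    rw [hQdefn, Polynomial.coeff_sub, hPcoeff (n - 1) (by omega), hbinexp] at hcoeffQ
    have hnm : n - (n - 1) = 1 := by omega
    rw [hnm, hchoose, pow_one] at hcoeffQ
    linarith
  -- Vieta via the complex factorization
  have hprodC : (∑ i ∈ Finset.range (n + 1),
      Polynomial.C ((n.choose i : ℂ) * (W i : ℂ)) * Polynomial.X ^ i)
      = Polynomial.C (W n : ℂ) * ∏ i : Fin n, (Polynomial.X - Polynomial.C (γ i)) := by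
    apply Polynomial.funext
    intro s
    rw [Polynomial.eval_finset_sum]
    simp only [Polynomial.eval_mul, Polynomial.eval_C, Polynomial.eval_pow, Polynomial.eval_X,
      Polynomial.eval_prod, Polynomial.eval_sub]
    exact hfact s
  have hsumγ : ((n : ℂ) * (W (n - 1) : ℂ)) = (W n : ℂ) * (-∑ i : Fin n, γ i) := by
    have hc := congrArg (fun p => Polynomial.coeff p (n - 1)) hprodC
    have hlhs : (∑ i ∈ Finset.range (n + 1),
        Polynomial.C ((n.choose i : ℂ) * (W i : ℂ)) * Polynomial.X ^ i).coeff (n - 1)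
        = (n : ℂ) * (W (n - 1) : ℂ) := by
      rw [Polynomial.finset_sum_coeff, Finset.sum_eq_single (n - 1)]
      · rw [Polynomial.coeff_C_mul, Polynomial.coeff_X_pow, if_pos rfl, mul_one, hchoose]
      · intro i _ hne
        rw [Polynomial.coeff_C_mul, Polynomial.coeff_X_pow, if_neg (Ne.symm hne), mul_zero]
      · intro h
        exact absurd (Finset.mem_range.mpr (by omega)) h
    have hdeg_prod : (∏ i : Fin n, (Polynomial.X - Polynomial.C (γ i))).natDegree = n := by
      rw [Polynomial.natDegree_prod]
      · simp [Polynomial.natDegree_X_sub_C]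
      · intro i _
        exact Polynomial.X_sub_C_ne_zero _
    have hrhs : (Polynomial.C (W n : ℂ) *
        ∏ i : Fin n, (Polynomial.X - Polynomial.C (γ i))).coeff (n - 1)
        = (W n : ℂ) * (-∑ i : Fin n, γ i) := by
      rw [Polynomial.coeff_C_mul]
      congr 1
      have := Polynomial.prod_X_sub_C_nextCoeff (s := (Finset.univ : Finset (Fin n))) γ
      rw [Polynomial.nextCoeff, hdeg_prod, if_neg (by omega)] at this
      exact this
    rw [hlhs, hrhs] at hc
    exact hc
  -- take real parts
  have hre : (n : ℝ) * W (n - 1) = V * (-(∑ i : Fin n, (γ i).re)) := by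
    have := congrArg Complex.re hsumγ
    simpa [Complex.mul_re, ← hWnV, Complex.re_sum] using this
  have hsum_re : (n : ℝ) * rKE ≤ -(∑ i : Fin n, (γ i).re) := by
    rw [← mul_le_mul_iff_right₀ hV0, ← hre]
    calc V * ((n : ℝ) * rKE) = V * rKE * n := by ring
      _ ≤ (n : ℝ) * W (n - 1) := hkey
  calc (n : ℝ) * rKE ≤ -(∑ i : Fin n, (γ i).re) := hsum_re
    _ = ∑ i : Fin n, -((γ i).re) := by rw [Finset.sum_neg_distrib]
    _ ≤ ∑ i : Fin n, |(γ i).re| := Finset.sum_le_sum fun i _ => neg_le_abs _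
end

section
/- Let K be a convex body in ℝⁿ and let E be a convex body in ℝⁿ with nonempty interior, and let γ_1, …, γ_n be the complex roots (counted with multiplicity) of the relative Steiner polynomial f(K,E,s). If Re(γ_i) ≤ 0 for all i = 1, …, n, then |Re(γ_1)| + ⋯ + |Re(γ_n)| ≤ n·R(K;E). -/
open scoped Pointwise
open MeasureTheory Finset

private lemma aux_tendsto (m : ℕ) (c : ℕ → ℝ) :
    Filter.Tendsto (fun ρ : ℝ => (∑ i ∈ Finset.range (m+1), c i * ρ ^ i) / ρ ^ m)
      Filter.atTop (nhds (c m)) := by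
  have h0 : Filter.Tendsto
      (fun ρ : ℝ => (∑ i ∈ Finset.range m, c i * (ρ ^ (m - i))⁻¹) + c m)
      Filter.atTop (nhds ((∑ i ∈ Finset.range m, (0:ℝ)) + c m)) := by
    apply Filter.Tendsto.add _ tendsto_const_nhds
    apply tendsto_finset_sum
    intro i hi
    have hmi : m - i ≠ 0 := Nat.sub_ne_zero_of_lt (Finset.mem_range.mp hi)
    have h1 : Filter.Tendsto (fun ρ : ℝ => (ρ ^ (m - i))⁻¹) Filter.atTop (nhds 0) :=
      (Filter.tendsto_pow_atTop hmi).inv_tendsto_atTop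
    simpa using h1.const_mul (c i)
  simp only [Finset.sum_const_zero, zero_add] at h0
  apply h0.congr'
  filter_upwards [Filter.eventually_gt_atTop (0:ℝ)] with ρ hρ
  rw [Finset.sum_range_succ, add_div, Finset.sum_div]
  congr 1
  · apply Finset.sum_congr rfl
    intro i hi
    have hi' := Finset.mem_range.mp hi
    have hpow : ρ ^ m = ρ ^ i * ρ ^ (m - i) := by
      rw [← pow_add, Nat.add_sub_cancel' hi'.le]
    rw [hpow, mul_div_assoc, div_mul_eq_div_div, div_self (by positivity), one_div]
  · rw [mul_div_assoc, div_self (by positivity), mul_one]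

/-- If `γ 1, …, γ n` are the complex roots, with multiplicity, of the
relative Steiner polynomial `f(K,E,s)` of a convex body `K` relative to a convex body `E`
with nonempty interior, and all of them have non-positive real part, then
`|Re γ 1| + ⋯ + |Re γ n| ≤ n · R(K;E)`. -/
theorem steiner_roots_sum_re_le_circumradius
    {n : ℕ}
    (K E : Set (EuclideanSpace ℝ (Fin n)))
    (hKconv : Convex ℝ K) (hKcomp : IsCompact K) (hKne : K.Nonempty)
    (hEconv : Convex ℝ E) (hEcomp : IsCompact E) (hEne : E.Nonempty)
    (hEint : (interior E).Nonempty)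
    (W : ℕ → ℝ)
    (hW : ∀ ρ : ℝ, 0 ≤ ρ →
      volume (K + ρ • E) =
        ENNReal.ofReal (∑ i ∈ Finset.range (n + 1), (n.choose i : ℝ) * W i * ρ ^ i))
    (γ : Fin n → ℂ)
    (hfact : ∀ s : ℂ, (∑ i ∈ Finset.range (n + 1), (n.choose i : ℂ) * (W i : ℂ) * s ^ i) =
      (W n : ℂ) * ∏ i : Fin n, (s - γ i))
    (hneg : ∀ i : Fin n, (γ i).re ≤ 0)
    (RKE : ℝ)
    (hR : IsLeast {R : ℝ | 0 ≤ R ∧ ∃ x : EuclideanSpace ℝ (Fin n), K ⊆ x +ᵥ R • E} RKE) :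
    ∑ i : Fin n, |(γ i).re| ≤ n * RKE := by
  obtain ⟨⟨hR0, x, hKx⟩, -⟩ := hR
  -- trivial case n = 0
  rcases Nat.eq_zero_or_pos n with hn0 | hn0
  · subst hn0; simp
  obtain ⟨m, hm⟩ : ∃ m, n = m + 1 := ⟨n - 1, (Nat.succ_pred_eq_of_pos hn0).symm⟩
  obtain ⟨x₀, hx₀⟩ := hKne
  -- basic measure facts
  set V : ℝ := (volume E).toReal with hVdef
  have hEfin : volume E ≠ ⊤ := (hEcomp.measure_lt_top (μ := volume)).ne
  have hEpos : 0 < volume E := Measure.measure_pos_of_nonempty_interior _ hEint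
  have hVpos : 0 < V := ENNReal.toReal_pos hEpos.ne' hEfin
  have hEV : volume E = ENNReal.ofReal V := (ENNReal.ofReal_toReal hEfin).symm
  have hsmul : ∀ r : ℝ, 0 ≤ r → volume (r • E) = ENNReal.ofReal (r ^ n * V) := by
    intro r hr
    rw [Measure.addHaar_smul, finrank_euclideanSpace_fin, hEV,
      ← ENNReal.ofReal_mul (by positivity), abs_of_nonneg (by positivity)]
  set p : ℝ → ℝ := fun ρ => ∑ i ∈ Finset.range (n + 1), (n.choose i : ℝ) * W i * ρ ^ i
    with hpdef
  -- lower bound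
  have hlb : ∀ ρ : ℝ, 0 < ρ → ρ ^ n * V ≤ p ρ := by
    intro ρ hρ
    have hsub : (x₀ +ᵥ ρ • E) ⊆ K + ρ • E := by
      rintro z hz
      obtain ⟨e, he, rfl⟩ := hz
      exact Set.add_mem_add hx₀ he
    have h1 : ENNReal.ofReal (ρ ^ n * V) ≤ ENNReal.ofReal (p ρ) := by
      rw [← hW ρ hρ.le, ← hsmul ρ hρ.le, ← measure_vadd volume x₀ (ρ • E)]
      exact measure_mono hsub
    rcases ENNReal.ofReal_le_ofReal_iff'.mp h1 with h | h
    · exact h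
    · nlinarith [pow_pos hρ n]
  -- upper bound
  have hub : ∀ ρ : ℝ, 0 < ρ → p ρ ≤ (RKE + ρ) ^ n * V := by
    intro ρ hρ
    have hsub : K + ρ • E ⊆ x +ᵥ (RKE + ρ) • E := by
      rintro z hz
      obtain ⟨k, hk, e, he, rfl⟩ := hz
      obtain ⟨r, hr, rfl⟩ := hKx hk
      have : r + e ∈ RKE • E + ρ • E := Set.add_mem_add hr he
      rw [← hEconv.add_smul hR0 hρ.le] at this
      simpa [vadd_eq_add, add_assoc] using Set.vadd_mem_vadd_set (a := x) this
    have h1 : ENNReal.ofReal (p ρ) ≤ ENNReal.ofReal ((RKE + ρ) ^ n * V) := by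
      rw [← hW ρ hρ.le, ← hsmul (RKE + ρ) (by positivity),
        ← measure_vadd volume x ((RKE + ρ) • E)]
      exact measure_mono hsub
    exact (ENNReal.ofReal_le_ofReal_iff (by positivity)).mp h1
  -- the limit of p ρ / ρ ^ n is W n
  have hL1 : Filter.Tendsto (fun ρ : ℝ => p ρ / ρ ^ n) Filter.atTop (nhds (W n)) := by
    have := aux_tendsto n (fun i => (n.choose i : ℝ) * W i)
    simpa using this
  -- W n = V
  have hWnV : W n = V := by
    have hge : V ≤ W n := by
      apply ge_of_tendsto hL1
      filter_upwards [Filter.eventually_gt_atTop (0:ℝ)] with ρ hρ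
      rw [le_div_iff₀ (by positivity)]
      calc V * ρ ^ n = ρ ^ n * V := by ring
        _ ≤ p ρ := hlb ρ hρ
    have hle : W n ≤ V := by
      have hq : Filter.Tendsto (fun ρ : ℝ => (RKE * ρ⁻¹ + 1) ^ n * V)
          Filter.atTop (nhds ((RKE * 0 + 1) ^ n * V)) := by
        exact (((tendsto_inv_atTop_zero.const_mul RKE).add tendsto_const_nhds).pow n).mul_const V
      simp only [mul_zero, zero_add, one_pow, one_mul] at hq
      apply le_of_tendsto_of_tendsto hL1 hq
      filter_upwards [Filter.eventually_gt_atTop (0:ℝ)] with ρ h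
      rw [div_le_iff₀ (by positivity)]
      calc p ρ ≤ (RKE + ρ) ^ n * V := hub ρ h
        _ = (RKE * ρ⁻¹ + 1) ^ n * V * ρ ^ n := by
            rw [mul_comm ((RKE * ρ⁻¹ + 1) ^ n * V) (ρ ^ n), ← mul_assoc, ← mul_pow]
            field_simp
    linarith
  -- second limit
  have hL2 : Filter.Tendsto (fun ρ : ℝ => ((RKE + ρ) ^ n * V - p ρ) / ρ ^ m)
      Filter.atTop (nhds ((n : ℝ) * (RKE * V - W m))) := by
    have hD : ∀ ρ : ℝ, (RKE + ρ) ^ n * V - p ρ =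
        ∑ j ∈ Finset.range (m + 1),
          ((n.choose j : ℝ) * (RKE ^ (n - j) * V - W j)) * ρ ^ j := by
      intro ρ
      have hbin : (RKE + ρ) ^ n = ∑ j ∈ Finset.range (n + 1),
          (n.choose j : ℝ) * RKE ^ (n - j) * ρ ^ j := by
        rw [add_comm RKE ρ, add_pow]
        apply Finset.sum_congr rfl
        intro j hj; ring
      rw [hbin, hpdef, Finset.sum_mul, ← Finset.sum_sub_distrib,
        show n + 1 = (m + 1) + 1 by omega, Finset.sum_range_succ]
      have hlast : (n.choose (m+1) : ℝ) * RKE ^ (n - (m+1)) * ρ ^ (m+1) * V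
          - (n.choose (m+1) : ℝ) * W (m+1) * ρ ^ (m+1) = 0 := by
        have h1 : n.choose (m+1) = 1 := by rw [hm]; exact Nat.choose_self _
        have h2 : n - (m+1) = 0 := by omega
        have h3 : W (m+1) = V := by rw [← hm, hWnV]
        rw [h1, h2, h3]; ring
      rw [hlast, add_zero]
      apply Finset.sum_congr rfl
      intro j hj; ring
    have := aux_tendsto m (fun j => (n.choose j : ℝ) * (RKE ^ (n - j) * V - W j))
    have hcm : (n.choose m : ℝ) * (RKE ^ (n - m) * V - W m) = (n : ℝ) * (RKE * V - W m) := by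
      have h1 : n.choose m = n := by rw [hm]; simp [Nat.choose_succ_self_right]
      have h2 : n - m = 1 := by omega
      rw [h1, h2, pow_one]
    rw [hcm] at this
    apply this.congr
    intro ρ
    rw [hD ρ]
  -- from hub, the limit is nonneg
  have hkey : 0 ≤ (n : ℝ) * (RKE * V - W m) := by
    apply ge_of_tendsto hL2
    filter_upwards [Filter.eventually_gt_atTop (0:ℝ)] with ρ hρ
    apply div_nonneg _ (by positivity)
    linarith [hub ρ hρ]
  -- Vieta: coefficient extraction
  have hS : ∑ i : Fin n, |(γ i).re| = -(∑ i : Fin n, (γ i).re) := by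
    rw [← Finset.sum_neg_distrib]
    exact Finset.sum_congr rfl fun i _ => abs_of_nonpos (hneg i)
  have hvieta : (n : ℝ) * W m = W n * ∑ i : Fin n, |(γ i).re| := by
    set P : Polynomial ℂ :=
      ∑ i ∈ Finset.range (n + 1), Polynomial.C ((n.choose i : ℂ) * (W i : ℂ)) * Polynomial.X ^ i
      with hPdef
    set Q : Polynomial ℂ :=
      Polynomial.C (W n : ℂ) * ∏ i : Fin n, (Polynomial.X - Polynomial.C (γ i)) with hQdef
    have hPQ : P = Q := by
      apply Polynomial.funext
      intro s
      simp only [hPdef, hQdef, Polynomial.eval_finset_sum, Polynomial.eval_mul,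
        Polynomial.eval_C, Polynomial.eval_pow, Polynomial.eval_X, Polynomial.eval_prod,
        Polynomial.eval_sub]
      exact hfact s
    have hPc : P.coeff m = (n.choose m : ℂ) * (W m : ℂ) := by
      rw [hPdef, Polynomial.finset_sum_coeff]
      simp only [Polynomial.coeff_C_mul, Polynomial.coeff_X_pow, mul_ite, mul_one, mul_zero]
      rw [Finset.sum_ite_eq (Finset.range (n+1)) m]
      simp [Finset.mem_range]; omega
    have hmonic : (∏ i : Fin n, (Polynomial.X - Polynomial.C (γ i))).Monic :=
      Polynomial.monic_prod_of_monic _ _ fun i _ => Polynomial.monic_X_sub_C _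
    have hdeg : (∏ i : Fin n, (Polynomial.X - Polynomial.C (γ i))).natDegree = n := by
      rw [Polynomial.natDegree_prod_of_monic _ _ fun i _ => Polynomial.monic_X_sub_C _]
      simp
    have hQc : Q.coeff m = (W n : ℂ) * (-∑ i : Fin n, γ i) := by
      rw [hQdef, Polynomial.coeff_C_mul]
      congr 1
      have h1 : m = (∏ i : Fin n, (Polynomial.X - Polynomial.C (γ i))).natDegree - 1 := by
        rw [hdeg]; omega
      rw [h1, ← Polynomial.nextCoeff_of_natDegree_pos (by rw [hdeg]; omega),
        Polynomial.prod_X_sub_C_nextCoeff]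
    have hC : (n.choose m : ℂ) * (W m : ℂ) = (W n : ℂ) * (-∑ i : Fin n, γ i) := by
      rw [← hPc, ← hQc, hPQ]
    have hre := congrArg Complex.re hC
    simp only [Complex.mul_re, Complex.natCast_re, Complex.ofReal_re, Complex.natCast_im,
      Complex.ofReal_im, Complex.neg_re, Complex.re_sum, mul_zero, zero_mul, sub_zero] at hre
    have hch : n.choose m = n := by rw [hm]; simp [Nat.choose_succ_self_right]
    rw [hch] at hre
    rw [hre, hS]
  -- conclusion
  have hSnonneg : 0 ≤ ∑ i : Fin n, |(γ i).re| := Finset.sum_nonneg fun i _ => abs_nonneg _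
  rw [hWnV] at hvieta
  nlinarith [hvieta, hkey, hVpos]
end

section
/- Let K and E be convex bodies in ℝⁿ with nonempty interiors such that E ⊆ K and W_0(K;E) = W_1(K;E) (by Favard's theorem this holds for every p-tangential body K of E with 0 ≤ p ≤ n−1). Then r(K;E) = 1 and there exists a complex root γ of the relative Steiner polynomial f(K,E,s) with Re(γ) ≥ −1 = −r(K;E). -/
open scoped Pointwise
open MeasureTheory Finset

private lemma aux_msum_le (s : Multiset ℝ) (h : ∀ x ∈ s, x < 1) : s.sum ≤ s.card := by
  induction s using Multiset.induction_on with
  | empty => simp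
  | cons a t ih =>
    simp only [Multiset.sum_cons, Multiset.card_cons]
    have ha := h a (Multiset.mem_cons_self a t)
    have ht := ih (fun x hx => h x (Multiset.mem_cons_of_mem hx))
    push_cast
    linarith

private lemma aux_msum_lt (s : Multiset ℝ) (hs : s ≠ 0) (h : ∀ x ∈ s, x < 1) :
    s.sum < s.card := by
  obtain ⟨a, ha⟩ := Multiset.exists_mem_of_ne_zero hs
  obtain ⟨t, rfl⟩ : ∃ t, s = a ::ₘ t := ⟨s.erase a, (Multiset.cons_erase ha).symm⟩
  have ht := aux_msum_le t (fun x hx => h x (Multiset.mem_cons_of_mem hx))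
  have ha1 := h a (Multiset.mem_cons_self a t)
  simp only [Multiset.sum_cons, Multiset.card_cons]
  push_cast
  linarith

private lemma aux_logderiv (s : Multiset ℂ) (h : ∀ γ ∈ s, γ ≠ 0) :
    (Polynomial.derivative (s.map fun γ => Polynomial.X - Polynomial.C γ).prod).eval 0
      = (s.map fun γ => -γ⁻¹).sum *
        ((s.map fun γ => Polynomial.X - Polynomial.C γ).prod).eval 0 := by
  induction s using Multiset.induction_on with
  | empty => simp
  | cons a t ih =>
    have ha : a ≠ 0 := h a (Multiset.mem_cons_self a t)
    have iht := ih (fun x hx => h x (Multiset.mem_cons_of_mem hx))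
    simp only [Multiset.map_cons, Multiset.prod_cons, Multiset.sum_cons,
      Polynomial.derivative_mul, Polynomial.eval_add, Polynomial.eval_mul,
      Polynomial.eval_sub, Polynomial.eval_X, Polynomial.eval_C,
      Polynomial.derivative_sub, Polynomial.derivative_X, Polynomial.derivative_C,
      sub_zero, Polynomial.eval_one, iht]
    field_simp
    ring

private lemma aux_re_lt {γ : ℂ} (h : γ.re < -1) : (-γ⁻¹).re < 1 := by
  have hN : γ.re ^ 2 ≤ Complex.normSq γ := by
    rw [Complex.normSq_apply]; nlinarith [sq_nonneg γ.im]
  have hx2 : -γ.re < γ.re ^ 2 := by nlinarith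
  have hNpos : 0 < Complex.normSq γ := by nlinarith
  rw [Complex.neg_re, Complex.inv_re]
  have heq : -(γ.re / Complex.normSq γ) = (-γ.re) / Complex.normSq γ := by ring
  rw [heq, div_lt_one hNpos]
  linarith

/-- If `K, E` are convex bodies in `ℝⁿ` with nonempty interiors,
`E ⊆ K` and `W 0 = W 1` (which by Favard's theorem holds for every `p`-tangential body
`K` of `E`), then `r(K;E) = 1` and some complex root `γ` of the relative Steiner
polynomial satisfies `Re γ ≥ -1 = -r(K;E)`. -/
theorem steiner_root_ge_neg_inradius_of_tangential
    {n : ℕ}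
    (K E : Set (EuclideanSpace ℝ (Fin n)))
    (hKconv : Convex ℝ K) (hKcomp : IsCompact K) (hKne : K.Nonempty)
    (hKint : (interior K).Nonempty)
    (hEconv : Convex ℝ E) (hEcomp : IsCompact E) (hEne : E.Nonempty)
    (hEint : (interior E).Nonempty)
    (hEK : E ⊆ K)
    (W : ℕ → ℝ)
    (hW : ∀ ρ : ℝ, 0 ≤ ρ →
      volume (K + ρ • E) =
        ENNReal.ofReal (∑ i ∈ Finset.range (n + 1), (n.choose i : ℝ) * W i * ρ ^ i))
    (h01 : W 0 = W 1)
    (rKE : ℝ)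
    (hr : IsGreatest {r : ℝ | 0 ≤ r ∧ ∃ x : EuclideanSpace ℝ (Fin n), x +ᵥ r • E ⊆ K} rKE) :
    rKE = 1 ∧
    ∃ γ : ℂ, (∑ i ∈ Finset.range (n + 1), (n.choose i : ℂ) * (W i : ℂ) * γ ^ i) = 0 ∧
      -1 ≤ γ.re := by
  rcases Nat.eq_zero_or_pos n with hn0 | hn
  · -- dimension 0 : the inradius set is unbounded, contradicting `IsGreatest`
    exfalso
    subst hn0
    obtain ⟨⟨hr0, x, hx⟩, hub⟩ := hr
    obtain ⟨k, hk⟩ := hKne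
    have hmem : rKE + 1 ∈ {r : ℝ | 0 ≤ r ∧
        ∃ x : EuclideanSpace ℝ (Fin 0), x +ᵥ r • E ⊆ K} := by
      refine ⟨by linarith, x, ?_⟩
      intro y _
      have hyk : y = k := by ext i; exact i.elim0
      rw [hyk]; exact hk
    have := hub hmem
    linarith
  -- now 1 ≤ n
  -- the sum at ρ = 0 equals W 0
  have hsum0 : (∑ i ∈ Finset.range (n + 1), (n.choose i : ℝ) * W i * (0:ℝ) ^ i) = W 0 := by
    rw [Finset.sum_eq_single 0]
    · simp
    · intro i _ hi
      rw [zero_pow hi, mul_zero]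
    · intro h; exact absurd (Finset.mem_range.mpr (by omega)) h
  have hvolK : volume K = ENNReal.ofReal (W 0) := by
    have h0 := hW 0 le_rfl
    rw [Set.zero_smul_set hEne, add_zero, hsum0] at h0
    exact h0
  have hW0pos : 0 < W 0 := by
    have hPos : 0 < volume K :=
      lt_of_lt_of_le (isOpen_interior.measure_pos volume hKint)
        (measure_mono interior_subset)
    rw [hvolK] at hPos
    exact ENNReal.ofReal_pos.mp hPos
  -- 1 ≤ rKE
  have hr1 : 1 ≤ rKE := by
    refine hr.2 ⟨zero_le_one, 0, ?_⟩
    have h1E : (1:ℝ) • E = E := one_smul ℝ E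
    rw [h1E, zero_vadd]
    exact hEK
  have hrpos : 0 < rKE := lt_of_lt_of_le one_pos hr1
  obtain ⟨⟨hr0, x, hx⟩, hub⟩ := hr
  -- key upper bound : p ρ ≤ W0 (1 + ρ/rKE)^n for all ρ ≥ 0
  have key : ∀ ρ : ℝ, 0 ≤ ρ →
      (∑ i ∈ Finset.range (n + 1), (n.choose i : ℝ) * W i * ρ ^ i)
        ≤ W 0 * (1 + ρ / rKE) ^ n := by
    intro ρ hρ
    set c := ρ / rKE with hc
    have hc0 : 0 ≤ c := div_nonneg hρ hrpos.le
    have hcr : c * rKE = ρ := div_mul_cancel₀ ρ (ne_of_gt hrpos)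
    have hincl : K + ρ • E ⊆ (-(c • x)) +ᵥ ((1 + c) • K) := by
      intro a ha
      obtain ⟨k, hk, y, hy, rfl⟩ := ha
      obtain ⟨e, he, rfl⟩ := hy
      have hxe : x + rKE • e ∈ K := hx ⟨rKE • e, Set.smul_mem_smul_set he, rfl⟩
      refine ⟨k + c • (x + rKE • e), ?_, ?_⟩
      · rw [hKconv.add_smul zero_le_one hc0, one_smul]
        exact Set.add_mem_add hk (Set.smul_mem_smul_set hxe)
      · show -(c • x) + (k + c • (x + rKE • e)) = k + ρ • e
        rw [smul_add, smul_smul, hcr]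
        abel
    have h1 := measure_mono (μ := volume) hincl
    have h2 : volume ((-(c • x)) +ᵥ ((1 + c) • K))
        = ENNReal.ofReal ((1 + c) ^ n * W 0) := by
      rw [measure_vadd, Measure.addHaar_smul_of_nonneg volume (by linarith) K,
        finrank_euclideanSpace_fin, hvolK,
        ← ENNReal.ofReal_mul (by positivity)]
    rw [hW ρ hρ, h2] at h1
    rw [mul_comm]
    exact (ENNReal.ofReal_le_ofReal_iff
      (mul_nonneg (pow_nonneg (by linarith) n) hW0pos.le)).mp h1
  -- derivative of p at 0 is n * W 1
  have hderiv_p : HasDerivAt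
      (fun ρ : ℝ => ∑ i ∈ Finset.range (n + 1), (n.choose i : ℝ) * W i * ρ ^ i)
      ((n : ℝ) * W 1) 0 := by
    have h : ∀ i ∈ Finset.range (n + 1),
        HasDerivAt (fun ρ : ℝ => (n.choose i : ℝ) * W i * ρ ^ i)
          ((n.choose i : ℝ) * W i * ((i : ℝ) * (0:ℝ) ^ (i - 1))) 0 :=
      fun i _ => (hasDerivAt_pow i (0:ℝ)).const_mul _
    have hsum := HasDerivAt.fun_sum h
    have hval : (∑ i ∈ Finset.range (n + 1),
        (n.choose i : ℝ) * W i * ((i : ℝ) * (0:ℝ) ^ (i - 1))) = (n : ℝ) * W 1 := by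
      rw [Finset.sum_eq_single 1]
      · simp [Nat.choose_one_right]
      · intro i _ hi
        rcases Nat.eq_zero_or_pos i with rfl | hipos
        · simp
        · have h2 : i - 1 ≠ 0 := by omega
          rw [zero_pow h2, mul_zero, mul_zero]
      · intro h; exact absurd (Finset.mem_range.mpr (by omega)) h
    rw [hval] at hsum
    exact hsum
  -- derivative of the upper bound at 0
  have hderiv_q : HasDerivAt (fun ρ : ℝ => W 0 * (1 + ρ / rKE) ^ n)
      (W 0 * ((n : ℝ) * (1 + 0 / rKE) ^ (n - 1) * (1 / rKE))) 0 := by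
    have h1 : HasDerivAt (fun ρ : ℝ => 1 + ρ / rKE) (1 / rKE) 0 := by
      simpa using ((hasDerivAt_id (0:ℝ)).div_const rKE).const_add 1
    exact (h1.pow n).const_mul _
  -- the difference is ≥ 0 on (0, ∞) and vanishes at 0, so its derivative at 0 is ≥ 0
  have hd_nonneg : 0 ≤ W 0 * ((n : ℝ) * (1 + 0 / rKE) ^ (n - 1) * (1 / rKE))
      - (n : ℝ) * W 1 := by
    have hF := hderiv_q.sub hderiv_p
    have hmono : nhdsWithin (0:ℝ) (Set.Ioi 0) ≤ nhdsWithin (0:ℝ) {(0:ℝ)}ᶜ :=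
      nhdsWithin_mono 0 (fun y (hy : y ∈ Set.Ioi (0:ℝ)) => (ne_of_gt hy : y ≠ 0))
    have htend := (hasDerivAt_iff_tendsto_slope.mp hF).mono_left hmono
    refine ge_of_tendsto htend ?_
    filter_upwards [self_mem_nhdsWithin] with ρ hρ
    have hρ0 : (0:ℝ) < ρ := hρ
    have hF0 : W 0 * (1 + (0:ℝ) / rKE) ^ n
        - (∑ i ∈ Finset.range (n + 1), (n.choose i : ℝ) * W i * (0:ℝ) ^ i) = 0 := by
      rw [hsum0]; simp
    have hFρ : 0 ≤ W 0 * (1 + ρ / rKE) ^ n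
        - (∑ i ∈ Finset.range (n + 1), (n.choose i : ℝ) * W i * ρ ^ i) :=
      sub_nonneg.mpr (key ρ hρ0.le)
    rw [slope_def_field]; simp only [Pi.sub_apply]; rw [hF0, sub_zero, sub_zero]
    exact div_nonneg hFρ hρ0.le
  have hnpos : (0:ℝ) < n := by exact_mod_cast hn
  have hrle : rKE ≤ 1 := by
    have hsimp : W 0 * ((n : ℝ) * (1 + 0 / rKE) ^ (n - 1) * (1 / rKE))
        = (n : ℝ) * W 0 / rKE := by
      rw [zero_div, add_zero, one_pow]; ring
    rw [hsimp, ← h01] at hd_nonneg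
    have h2 : (n : ℝ) * W 0 ≤ (n : ℝ) * W 0 / rKE := by linarith
    have h3 : ((n : ℝ) * W 0) * rKE ≤ (n : ℝ) * W 0 := by
      have := (le_div_iff₀ hrpos).mp h2
      linarith
    have hA : 0 < (n : ℝ) * W 0 := mul_pos hnpos hW0pos
    nlinarith
  have hreq : rKE = 1 := le_antisymm hrle hr1
  refine ⟨hreq, ?_⟩
  -- roots of the Steiner polynomial
  by_contra hcon
  push_neg at hcon
  set Q : Polynomial ℂ :=
    ∑ i ∈ Finset.range (n + 1),
      Polynomial.C ((n.choose i : ℂ) * (W i : ℂ)) * Polynomial.X ^ i with hQ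
  have hcoeff : ∀ k, k ≤ n → Q.coeff k = (n.choose k : ℂ) * (W k : ℂ) := by
    intro k hk
    rw [hQ, Polynomial.finset_sum_coeff]
    simp only [Polynomial.coeff_C_mul, Polynomial.coeff_X_pow, mul_ite, mul_one, mul_zero]
    rw [Finset.sum_ite_eq (Finset.range (n + 1)) k]
    simp [Nat.lt_succ_iff, hk]
  have hQ0 : Q.coeff 0 = (W 0 : ℂ) := by
    rw [hcoeff 0 (Nat.zero_le n)]; simp
  have hQ1 : Q.coeff 1 = (n : ℂ) * (W 1 : ℂ) := by
    rw [hcoeff 1 hn]; simp [Nat.choose_one_right]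
  have hW0C : (W 0 : ℂ) ≠ 0 := Complex.ofReal_ne_zero.mpr hW0pos.ne'
  have hW1C : (W 1 : ℂ) ≠ 0 := by rw [← h01]; exact hW0C
  have heval : ∀ γ : ℂ, Q.eval γ
      = ∑ i ∈ Finset.range (n + 1), (n.choose i : ℂ) * (W i : ℂ) * γ ^ i := by
    intro γ
    rw [hQ, Polynomial.eval_finset_sum]
    simp
  have hroots_lt : ∀ γ ∈ Q.roots, γ.re < -1 := by
    intro γ hγ
    exact hcon γ (by rw [← heval γ]; exact Polynomial.isRoot_of_mem_roots hγ)
  have hroots_ne : ∀ γ ∈ Q.roots, γ ≠ 0 := by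
    intro γ hγ hγ0
    have := Polynomial.isRoot_of_mem_roots hγ
    rw [Polynomial.IsRoot, hγ0, ← Polynomial.coeff_zero_eq_eval_zero, hQ0] at this
    exact hW0C this
  have hsplit : Polynomial.Splits Q := IsAlgClosed.splits Q
  have hcard : Multiset.card Q.roots = Q.natDegree :=
    Polynomial.splits_iff_card_roots.mp hsplit
  have hdeg_le : Q.natDegree ≤ n := by
    rw [hQ]
    refine Polynomial.natDegree_sum_le_of_forall_le _ _ fun i hi => ?_
    exact le_trans (Polynomial.natDegree_C_mul_X_pow_le _ _)
      (Nat.lt_succ_iff.mp (Finset.mem_range.mp hi))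
  have hdeg_ge : 1 ≤ Q.natDegree := by
    refine Polynomial.le_natDegree_of_ne_zero ?_
    rw [hQ1]
    exact mul_ne_zero (Nat.cast_ne_zero.mpr (by omega)) hW1C
  have hfact := hsplit.eq_prod_roots
  set S : ℂ := (Q.roots.map fun γ => -γ⁻¹).sum with hS
  have hkey : (Polynomial.derivative Q).eval 0 = S * Q.eval 0 := by
    conv_lhs => rw [hfact]
    conv_rhs => rw [hfact]
    rw [Polynomial.derivative_C_mul, Polynomial.eval_mul, Polynomial.eval_mul,
      aux_logderiv _ hroots_ne]
    ring
  have h1' : (Polynomial.derivative Q).eval 0 = (n : ℂ) * (W 0 : ℂ) := by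
    rw [← Polynomial.coeff_zero_eq_eval_zero, Polynomial.coeff_derivative, hQ1, ← h01]
    simp
  have h0' : Q.eval 0 = (W 0 : ℂ) := by
    rw [← Polynomial.coeff_zero_eq_eval_zero, hQ0]
  have hSn : S = (n : ℂ) := by
    have h := hkey
    rw [h1', h0'] at h
    exact (mul_right_cancel₀ hW0C h.symm)
  -- real parts
  have hSre : ((Q.roots.map fun γ => (-γ⁻¹).re).sum) = (n : ℝ) := by
    have h := congrArg Complex.re hSn
    rw [hS] at h
    have hre := Complex.reAddGroupHom.map_multiset_sum (Q.roots.map fun γ => -γ⁻¹)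
    rw [Multiset.map_map] at hre
    have hcomp : (⇑Complex.reAddGroupHom ∘ fun γ : ℂ => -γ⁻¹)
        = fun γ : ℂ => (-γ⁻¹).re := rfl
    rw [hcomp] at hre
    rw [← hre]
    have hre2 : Complex.reAddGroupHom ((Q.roots.map fun γ => -γ⁻¹).sum)
        = ((Q.roots.map fun γ => -γ⁻¹).sum).re := rfl
    rw [hre2, h]
    simp
  have hne : (Q.roots.map fun γ => (-γ⁻¹).re) ≠ 0 := by
    intro h0
    have := congrArg Multiset.card h0
    rw [Multiset.card_map, hcard] at this
    simp at this
    omega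
  have hlt := aux_msum_lt _ hne (by
    intro y hy
    obtain ⟨γ, hγ, rfl⟩ := Multiset.mem_map.mp hy
    exact aux_re_lt (hroots_lt γ hγ))
  rw [hSre, Multiset.card_map, hcard] at hlt
  have hfin : n < Q.natDegree := by exact_mod_cast hlt
  omega
end

section
/- The polynomial Σ_{i=2}^{15} binom(15,i) μ^i (equivalently, (1+μ)^{15} − 1 − 15μ) has a complex root μ with strictly positive real part. -/
open Finset Polynomial

/-- The quotient polynomial `q(μ) = ∑_{i=0}^{13} C(15, i+2) μ^i`. -/
noncomputable def qpoly : Polynomial ℂ :=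
  ∑ i ∈ Finset.range 14, Polynomial.C ((Nat.choose 15 (i + 2) : ℂ)) * Polynomial.X ^ i

lemma qpoly_eval (μ : ℂ) :
    qpoly.eval μ = ∑ i ∈ Finset.range 14, (Nat.choose 15 (i + 2) : ℂ) * μ ^ i := by
  simp only [qpoly, Polynomial.eval_finset_sum, Polynomial.eval_mul, Polynomial.eval_C,
    Polynomial.eval_pow, Polynomial.eval_X]

/-- If a root `r` has `r.re ≤ 0` and `z.re > 0`, then `‖(-(starRingEnd ℂ) z) - r‖ ≤ ‖z - r‖`. -/
lemma factor_le {z r : ℂ} (hz : 0 < z.re) (hr : r.re ≤ 0) :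
    ‖(-(starRingEnd ℂ) z) - r‖ ≤ ‖z - r‖ := by
  have h2 : Complex.normSq ((-(starRingEnd ℂ) z) - r) ≤ Complex.normSq (z - r) := by
    simp only [Complex.normSq_apply, Complex.sub_re, Complex.sub_im, Complex.neg_re,
      Complex.neg_im, Complex.conj_re, Complex.conj_im]
    nlinarith [mul_nonneg (le_of_lt hz) (neg_nonneg.mpr hr)]
  have := Real.sqrt_le_sqrt h2
  simpa [Complex.norm_def] using this

/-- Key existence: `qpoly` has a root with strictly positive real part. -/
lemma exists_root_pos_re : ∃ r : ℂ, qpoly.eval r = 0 ∧ 0 < r.re := by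
  by_contra hcon
  push_neg at hcon
  -- all roots of qpoly have nonpositive real part
  have hroots : ∀ r ∈ qpoly.roots, r.re ≤ 0 := by
    intro r hr
    have hr0 : qpoly.eval r = 0 := by
      have := Polynomial.isRoot_of_mem_roots hr
      simpa [Polynomial.IsRoot] using this
    by_contra h
    push_neg at h
    exact absurd h (not_lt.mpr (hcon r hr0))
  have hsplit : qpoly.Splits := IsAlgClosed.splits qpoly
  set z : ℂ := ⟨1/100, 4/7⟩ with hzdef
  have hzre : 0 < z.re := by norm_num [hzdef]
  set w : ℂ := -(starRingEnd ℂ) z with hwdef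
  -- the half-plane inequality ‖q(w)‖ ≤ ‖q(z)‖
  have hineq : ‖qpoly.eval w‖ ≤ ‖qpoly.eval z‖ := by
    rw [hsplit.eval_eq_prod_roots w,
        hsplit.eval_eq_prod_roots z]
    rw [norm_mul, norm_mul]
    apply mul_le_mul_of_nonneg_left _ (norm_nonneg _)
    rw [show ∀ s : Multiset ℂ, ‖s.prod‖ = (s.map norm).prod from
          fun s => map_multiset_prod (normHom : ℂ →*₀ ℝ) s,
        show ∀ s : Multiset ℂ, ‖s.prod‖ = (s.map norm).prod from
          fun s => map_multiset_prod (normHom : ℂ →*₀ ℝ) s,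
        Multiset.map_map, Multiset.map_map]
    apply Multiset.prod_map_le_prod_map₀
    · intro r _; exact norm_nonneg _
    · intro r hrmem
      exact factor_le hzre (hroots r hrmem)
  -- explicit evaluation shows the opposite strict inequality
  have hw : w = ⟨-(1/100), 4/7⟩ := by
    apply Complex.ext <;> simp [hwdef, hzdef]
  have hzval : qpoly.eval z =
      ⟨-182876355934255631426062720979381299 / 1384128720100000000000000000000000000,
        -49657531375497091196122564066338387 / 24222252601750000000000000000000000⟩ := by
    rw [qpoly_eval]
    simp only [Finset.sum_range_succ, Finset.sum_range_zero]
    simp only [show Nat.choose 15 2 = 105 by decide, show Nat.choose 15 3 = 455 by decide, show Nat.choose 15 4 = 1365 by decide, show Nat.choose 15 5 = 3003 by decide, show Nat.choose 15 6 = 5005 by decide, show Nat.choose 15 7 = 6435 by decide, show Nat.choose 15 8 = 6435 by decide, show Nat.choose 15 9 = 5005 by decide, show Nat.choose 15 10 = 3003 by decide, show Nat.choose 15 11 = 1365 by decide, show Nat.choose 15 12 = 455 by decide, show Nat.choose 15 13 = 105 by decide, show Nat.choose 15 14 = 15 by decide, show Nat.choose 15 15 = 1 by decide]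
    norm_num [hzdef, Complex.ext_iff, pow_succ, Complex.mul_re, Complex.mul_im]
  have hwval : qpoly.eval w =
      ⟨3715581250949274136653319769430984299 / 1384128720100000000000000000000000000,
        82222285761300575325937834894425613 / 24222252601750000000000000000000000⟩ := by
    rw [qpoly_eval, hw]
    simp only [Finset.sum_range_succ, Finset.sum_range_zero]
    simp only [show Nat.choose 15 2 = 105 by decide, show Nat.choose 15 3 = 455 by decide, show Nat.choose 15 4 = 1365 by decide, show Nat.choose 15 5 = 3003 by decide, show Nat.choose 15 6 = 5005 by decide, show Nat.choose 15 7 = 6435 by decide, show Nat.choose 15 8 = 6435 by decide, show Nat.choose 15 9 = 5005 by decide, show Nat.choose 15 10 = 3003 by decide, show Nat.choose 15 11 = 1365 by decide, show Nat.choose 15 12 = 455 by decide, show Nat.choose 15 13 = 105 by decide, show Nat.choose 15 14 = 15 by decide, show Nat.choose 15 15 = 1 by decide]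
    norm_num [Complex.ext_iff, pow_succ, Complex.mul_re, Complex.mul_im]
  have hlt : ‖qpoly.eval z‖ < ‖qpoly.eval w‖ := by
    have h2 : Complex.normSq (qpoly.eval z) < Complex.normSq (qpoly.eval w) := by
      rw [hzval, hwval]
      simp only [Complex.normSq_apply]
      norm_num
    have h1 : ‖qpoly.eval z‖ ^ 2 < ‖qpoly.eval w‖ ^ 2 := by
      rwa [Complex.sq_norm, Complex.sq_norm]
    exact lt_of_pow_lt_pow_left₀ 2 (norm_nonneg _) h1
  exact absurd hineq (not_le.mpr hlt)

/-- The polynomial `∑_{i=2}^{15} C(15,i) μ^i` (equivalently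
`(1+μ)^{15} − 1 − 15μ`) has a complex root with strictly positive real part. -/
theorem exists_positive_re_root_dim15 :
    ∃ μ : ℂ, (∑ i ∈ Finset.Icc 2 15, (Nat.choose 15 i : ℂ) * μ ^ i) = 0 ∧ 0 < μ.re := by
  obtain ⟨r, hr0, hrre⟩ := exists_root_pos_re
  refine ⟨r, ?_, hrre⟩
  have key : (∑ i ∈ Finset.Icc 2 15, (Nat.choose 15 i : ℂ) * r ^ i)
      = r ^ 2 * qpoly.eval r := by
    rw [qpoly_eval, Finset.mul_sum]
    rw [show Finset.Icc 2 15 = Finset.Ico 2 16 by rfl, Finset.sum_Ico_eq_sum_range]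
    apply Finset.sum_congr rfl
    intro i _
    rw [show 2 + i = i + 2 from Nat.add_comm 2 i]
    ring
  rw [key, hr0, mul_zero]
end

section
/- Let 1 ≤ n ≤ 5 and let W_0, W_1, …, W_n be strictly positive real numbers satisfying W_i² ≥ W_{i−1}·W_{i+1} for all 1 ≤ i ≤ n−1. Then the polynomial Σ_{i=0}^n binom(n,i) W_i s^i is a Hurwitz polynomial, i.e. every complex root of it has strictly negative real part. -/
open Finset

private lemma lc_cross (a b c d e f : ℝ) (hb : 0 ≤ b) (hc : 0 < c) (hd : 0 < d)
    (he : 0 ≤ e) (hcf : 0 ≤ c * f) (h1 : a * d ≤ b * c) (h2 : c * f ≤ d * e) :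
    a * f ≤ b * e := by
  nlinarith [mul_le_mul h1 h2 hcf (by positivity), mul_pos hc hd]

set_option maxHeartbeats 2000000 in
private lemma hurwitz_aux3 (W : ℕ → ℝ) (x y : ℝ)
    (p0 : 0 < W 0) (p1 : 0 < W 1) (p2 : 0 < W 2) (p3 : 0 < W 3)
    (l1 : W 0 * W 2 ≤ W 1 ^ 2) (l2 : W 1 * W 3 ≤ W 2 ^ 2)
    (hcon : 0 ≤ x) (hy : y ≠ 0)
    (hR : ((1:ℝ)*W 0 + (-3:ℝ)*y^2*W 2 + (3:ℝ)*x*W 1 + (-3:ℝ)*x*y^2*W 3 + (3:ℝ)*x^2*W 2 + (1:ℝ)*x^3*W 3) = 0)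
    (hI : y * ((3:ℝ)*W 1 + (-1:ℝ)*y^2*W 3 + (6:ℝ)*x*W 2 + (3:ℝ)*x^2*W 3) = 0) : False := by
  have hI2 : ((3:ℝ)*W 1 + (-1:ℝ)*y^2*W 3 + (6:ℝ)*x*W 2 + (3:ℝ)*x^2*W 3) = 0 := (mul_eq_zero.mp hI).resolve_left hy
  have d03 : W 0 * W 3 ≤ W 1 * W 2 :=
    lc_cross _ _ _ _ _ _ p1.le p1 p2 p2.le (by positivity) (by linarith [l1]) (by linarith [l2])
  have hF : ((-8:ℝ)*W 3^2) * x^3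
      + ((-24:ℝ)*W 2*W 3) * x^2
      + ((-18:ℝ)*W 2^2 + (-6:ℝ)*W 1*W 3) * x
      + ((-9:ℝ)*W 1*W 2 + (1:ℝ)*W 0*W 3) = 0 := by
    linear_combination ((1:ℝ)*W 3) * hR + ((-3:ℝ)*W 2 + (-3:ℝ)*x*W 3) * hI2
  have c3 : ((-8:ℝ)*W 3^2) < 0 := by
    linarith [mul_pos p3 p3]
  have t3 : ((-8:ℝ)*W 3^2) * x^3 ≤ 0 :=
    mul_nonpos_of_nonpos_of_nonneg c3.le (by positivity)
  have c2 : ((-24:ℝ)*W 2*W 3) < 0 := by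
    linarith [mul_pos p2 p3]
  have t2 : ((-24:ℝ)*W 2*W 3) * x^2 ≤ 0 :=
    mul_nonpos_of_nonpos_of_nonneg c2.le (by positivity)
  have c1 : ((-18:ℝ)*W 2^2 + (-6:ℝ)*W 1*W 3) < 0 := by
    linarith [mul_pos p2 p2, mul_pos p1 p3]
  have t1 : ((-18:ℝ)*W 2^2 + (-6:ℝ)*W 1*W 3) * x ≤ 0 :=
    mul_nonpos_of_nonpos_of_nonneg c1.le hcon
  have c0 : ((-9:ℝ)*W 1*W 2 + (1:ℝ)*W 0*W 3) < 0 := by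
    linarith [d03, mul_pos p1 p2]
  linarith [hF, t3, t2, t1, c0]

set_option maxHeartbeats 2000000 in
private lemma hurwitz_aux4 (W : ℕ → ℝ) (x y : ℝ)
    (p0 : 0 < W 0) (p1 : 0 < W 1) (p2 : 0 < W 2) (p3 : 0 < W 3) (p4 : 0 < W 4)
    (l1 : W 0 * W 2 ≤ W 1 ^ 2) (l2 : W 1 * W 3 ≤ W 2 ^ 2) (l3 : W 2 * W 4 ≤ W 3 ^ 2)
    (hcon : 0 ≤ x) (hy : y ≠ 0)
    (hR : ((1:ℝ)*W 0 + (-6:ℝ)*y^2*W 2 + (1:ℝ)*y^4*W 4 + (4:ℝ)*x*W 1 + (-12:ℝ)*x*y^2*W 3 + (6:ℝ)*x^2*W 2 + (-6:ℝ)*x^2*y^2*W 4 + (4:ℝ)*x^3*W 3 + (1:ℝ)*x^4*W 4) = 0)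
    (hI : y * ((4:ℝ)*W 1 + (-4:ℝ)*y^2*W 3 + (12:ℝ)*x*W 2 + (-4:ℝ)*x*y^2*W 4 + (12:ℝ)*x^2*W 3 + (4:ℝ)*x^3*W 4) = 0) : False := by
  have hI2 : ((4:ℝ)*W 1 + (-4:ℝ)*y^2*W 3 + (12:ℝ)*x*W 2 + (-4:ℝ)*x*y^2*W 4 + (12:ℝ)*x^2*W 3 + (4:ℝ)*x^3*W 4) = 0 := (mul_eq_zero.mp hI).resolve_left hy
  have d03 : W 0 * W 3 ≤ W 1 * W 2 :=
    lc_cross _ _ _ _ _ _ p1.le p1 p2 p2.le (by positivity) (by linarith [l1]) (by linarith [l2])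
  have d14 : W 1 * W 4 ≤ W 2 * W 3 :=
    lc_cross _ _ _ _ _ _ p2.le p2 p3 p3.le (by positivity) (by linarith [l2]) (by linarith [l3])
  have d04 : W 0 * W 4 ≤ W 1 * W 3 :=
    lc_cross _ _ _ _ _ _ p1.le p2 p3 p3.le (by positivity) d03 (by linarith [l3])
  have d04c : W 0 * W 4 ≤ W 2 ^ 2 := d04.trans l2
  have hF : ((-64:ℝ)*W 4^3) * x^6
      + ((-384:ℝ)*W 3*W 4^2) * x^5
      + ((-768:ℝ)*W 3^2*W 4 + (-192:ℝ)*W 2*W 4^2) * x^4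
      + ((-512:ℝ)*W 3^3 + (-768:ℝ)*W 2*W 3*W 4) * x^3
      + ((-768:ℝ)*W 2*W 3^2 + (-144:ℝ)*W 2^2*W 4 + (-64:ℝ)*W 1*W 3*W 4 + (16:ℝ)*W 0*W 4^2) * x^2
      + ((-288:ℝ)*W 2^2*W 3 + (-128:ℝ)*W 1*W 3^2 + (32:ℝ)*W 0*W 3*W 4) * x
      + ((-96:ℝ)*W 1*W 2*W 3 + (16:ℝ)*W 1^2*W 4 + (16:ℝ)*W 0*W 3^2) = 0 := by
    linear_combination ((16:ℝ)*W 3^2 + (32:ℝ)*x*W 3*W 4 + (16:ℝ)*x^2*W 4^2) * hR + ((-24:ℝ)*W 2*W 3 + (4:ℝ)*W 1*W 4 + (4:ℝ)*y^2*W 3*W 4 + (-48:ℝ)*x*W 3^2 + (-12:ℝ)*x*W 2*W 4 + (4:ℝ)*x*y^2*W 4^2 + (-60:ℝ)*x^2*W 3*W 4 + (-20:ℝ)*x^3*W 4^2) * hI2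
  have c6 : ((-64:ℝ)*W 4^3) < 0 := by
    linarith [pow_pos p4 3]
  have t6 : ((-64:ℝ)*W 4^3) * x^6 ≤ 0 :=
    mul_nonpos_of_nonpos_of_nonneg c6.le (by positivity)
  have c5 : ((-384:ℝ)*W 3*W 4^2) < 0 := by
    linarith [mul_pos p3 (pow_pos p4 2)]
  have t5 : ((-384:ℝ)*W 3*W 4^2) * x^5 ≤ 0 :=
    mul_nonpos_of_nonpos_of_nonneg c5.le (by positivity)
  have c4 : ((-768:ℝ)*W 3^2*W 4 + (-192:ℝ)*W 2*W 4^2) < 0 := by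
    linarith [mul_pos (pow_pos p3 2) p4, mul_pos p2 (pow_pos p4 2)]
  have t4 : ((-768:ℝ)*W 3^2*W 4 + (-192:ℝ)*W 2*W 4^2) * x^4 ≤ 0 :=
    mul_nonpos_of_nonpos_of_nonneg c4.le (by positivity)
  have c3 : ((-512:ℝ)*W 3^3 + (-768:ℝ)*W 2*W 3*W 4) < 0 := by
    linarith [pow_pos p3 3, mul_pos (mul_pos p2 p3) p4]
  have t3 : ((-512:ℝ)*W 3^3 + (-768:ℝ)*W 2*W 3*W 4) * x^3 ≤ 0 :=
    mul_nonpos_of_nonpos_of_nonneg c3.le (by positivity)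
  have c2 : ((-768:ℝ)*W 2*W 3^2 + (-144:ℝ)*W 2^2*W 4 + (-64:ℝ)*W 1*W 3*W 4 + (16:ℝ)*W 0*W 4^2) < 0 := by
    linarith [mul_le_mul_of_nonneg_right d04c p4.le, mul_pos p2 (pow_pos p3 2), mul_pos (pow_pos p2 2) p4, mul_pos (mul_pos p1 p3) p4]
  have t2 : ((-768:ℝ)*W 2*W 3^2 + (-144:ℝ)*W 2^2*W 4 + (-64:ℝ)*W 1*W 3*W 4 + (16:ℝ)*W 0*W 4^2) * x^2 ≤ 0 :=
    mul_nonpos_of_nonpos_of_nonneg c2.le (by positivity)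
  have c1 : ((-288:ℝ)*W 2^2*W 3 + (-128:ℝ)*W 1*W 3^2 + (32:ℝ)*W 0*W 3*W 4) < 0 := by
    linarith [mul_le_mul_of_nonneg_right d04 p3.le, mul_pos (pow_pos p2 2) p3, mul_pos p1 (pow_pos p3 2)]
  have t1 : ((-288:ℝ)*W 2^2*W 3 + (-128:ℝ)*W 1*W 3^2 + (32:ℝ)*W 0*W 3*W 4) * x ≤ 0 :=
    mul_nonpos_of_nonpos_of_nonneg c1.le hcon
  have c0 : ((-96:ℝ)*W 1*W 2*W 3 + (16:ℝ)*W 1^2*W 4 + (16:ℝ)*W 0*W 3^2) < 0 := by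
    linarith [mul_le_mul_of_nonneg_right d14 p1.le, mul_le_mul_of_nonneg_right d03 p3.le, mul_pos (mul_pos p1 p2) p3]
  linarith [hF, t6, t5, t4, t3, t2, t1, c0]

set_option maxHeartbeats 2000000 in
private lemma hurwitz_aux5 (W : ℕ → ℝ) (x y : ℝ)
    (p0 : 0 < W 0) (p1 : 0 < W 1) (p2 : 0 < W 2) (p3 : 0 < W 3) (p4 : 0 < W 4) (p5 : 0 < W 5)
    (l1 : W 0 * W 2 ≤ W 1 ^ 2) (l2 : W 1 * W 3 ≤ W 2 ^ 2) (l3 : W 2 * W 4 ≤ W 3 ^ 2) (l4 : W 3 * W 5 ≤ W 4 ^ 2)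
    (hcon : 0 ≤ x) (hy : y ≠ 0)
    (hR : ((1:ℝ)*W 0 + (-10:ℝ)*y^2*W 2 + (5:ℝ)*y^4*W 4 + (5:ℝ)*x*W 1 + (-30:ℝ)*x*y^2*W 3 + (5:ℝ)*x*y^4*W 5 + (10:ℝ)*x^2*W 2 + (-30:ℝ)*x^2*y^2*W 4 + (10:ℝ)*x^3*W 3 + (-10:ℝ)*x^3*y^2*W 5 + (5:ℝ)*x^4*W 4 + (1:ℝ)*x^5*W 5) = 0)
    (hI : y * ((5:ℝ)*W 1 + (-10:ℝ)*y^2*W 3 + (1:ℝ)*y^4*W 5 + (20:ℝ)*x*W 2 + (-20:ℝ)*x*y^2*W 4 + (30:ℝ)*x^2*W 3 + (-10:ℝ)*x^2*y^2*W 5 + (20:ℝ)*x^3*W 4 + (5:ℝ)*x^4*W 5) = 0) : False := by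
  have hI2 : ((5:ℝ)*W 1 + (-10:ℝ)*y^2*W 3 + (1:ℝ)*y^4*W 5 + (20:ℝ)*x*W 2 + (-20:ℝ)*x*y^2*W 4 + (30:ℝ)*x^2*W 3 + (-10:ℝ)*x^2*y^2*W 5 + (20:ℝ)*x^3*W 4 + (5:ℝ)*x^4*W 5) = 0 := (mul_eq_zero.mp hI).resolve_left hy
  have d03 : W 0 * W 3 ≤ W 1 * W 2 :=
    lc_cross _ _ _ _ _ _ p1.le p1 p2 p2.le (by positivity) (by linarith [l1]) (by linarith [l2])
  have d14 : W 1 * W 4 ≤ W 2 * W 3 :=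
    lc_cross _ _ _ _ _ _ p2.le p2 p3 p3.le (by positivity) (by linarith [l2]) (by linarith [l3])
  have d04 : W 0 * W 4 ≤ W 1 * W 3 :=
    lc_cross _ _ _ _ _ _ p1.le p2 p3 p3.le (by positivity) d03 (by linarith [l3])
  have d25 : W 2 * W 5 ≤ W 3 * W 4 :=
    lc_cross _ _ _ _ _ _ p3.le p3 p4 p4.le (by positivity) (by linarith [l3]) (by linarith [l4])
  have d15 : W 1 * W 5 ≤ W 2 * W 4 :=
    lc_cross _ _ _ _ _ _ p2.le p3 p4 p4.le (by positivity) d14 (by linarith [l4])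
  have d05 : W 0 * W 5 ≤ W 1 * W 4 :=
    lc_cross _ _ _ _ _ _ p1.le p2 p3 p4.le (by positivity) d03 d25
  have d0523 : W 0 * W 5 ≤ W 2 * W 3 := d05.trans d14
  have l3' : W 2 * W 4 ≤ W 3 * W 3 := by linarith [l3]
  have l4' : W 3 * W 5 ≤ W 4 * W 4 := by linarith [l4]
  have hF : ((-1024:ℝ)*W 5^5) * x^10
      + ((-10240:ℝ)*W 4*W 5^4) * x^9
      + ((-38400:ℝ)*W 4^2*W 5^3 + (-7680:ℝ)*W 3*W 5^4) * x^8
      + ((-64000:ℝ)*W 4^3*W 5^2 + (-57600:ℝ)*W 3*W 4*W 5^3 + (-1280:ℝ)*W 2*W 5^4) * x^7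
      + ((-40000:ℝ)*W 4^4*W 5 + (-144000:ℝ)*W 3*W 4^2*W 5^2 + (-19200:ℝ)*W 3^2*W 5^3 + (-12800:ℝ)*W 2*W 4*W 5^3 + (960:ℝ)*W 1*W 5^4) * x^6
      + ((-120000:ℝ)*W 3*W 4^3*W 5 + (-96000:ℝ)*W 3^2*W 4*W 5^2 + (-40000:ℝ)*W 2*W 4^2*W 5^2 + (-6400:ℝ)*W 2*W 3*W 5^3 + (4000:ℝ)*W 1*W 4*W 5^3 + (352:ℝ)*W 0*W 5^4) * x^5
      + ((-120000:ℝ)*W 3^2*W 4^2*W 5 + (-16000:ℝ)*W 3^3*W 5^2 + (-40000:ℝ)*W 2*W 4^3*W 5 + (-48000:ℝ)*W 2*W 3*W 4*W 5^2 + (1600:ℝ)*W 2^2*W 5^3 + (4000:ℝ)*W 1*W 4^2*W 5^2 + (1600:ℝ)*W 1*W 3*W 5^3 + (1760:ℝ)*W 0*W 4*W 5^3) * x^4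
      + ((-40000:ℝ)*W 3^3*W 4*W 5 + (-80000:ℝ)*W 2*W 3*W 4^2*W 5 + (-8000:ℝ)*W 2*W 3^2*W 5^2 + (1600:ℝ)*W 1*W 2*W 5^3 + (3200:ℝ)*W 0*W 4^2*W 5^2 + (320:ℝ)*W 0*W 3*W 5^3) * x^3
      + ((-40000:ℝ)*W 2*W 3^2*W 4*W 5 + (-10000:ℝ)*W 2^2*W 4^2*W 5 + (4000:ℝ)*W 2^2*W 3*W 5^2 + (-5000:ℝ)*W 1*W 3*W 4^2*W 5 + (-2000:ℝ)*W 1*W 3^2*W 5^2 + (3000:ℝ)*W 1*W 2*W 4*W 5^2 + (400:ℝ)*W 1^2*W 5^3 + (2000:ℝ)*W 0*W 4^3*W 5 + (1800:ℝ)*W 0*W 3*W 4*W 5^2 + (-280:ℝ)*W 0*W 2*W 5^3) * x^2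
      + ((-10000:ℝ)*W 2^2*W 3*W 4*W 5 + (2000:ℝ)*W 2^3*W 5^2 + (-5000:ℝ)*W 1*W 3^2*W 4*W 5 + (1000:ℝ)*W 1^2*W 4*W 5^2 + (2000:ℝ)*W 0*W 3*W 4^2*W 5 + (200:ℝ)*W 0*W 3^2*W 5^2 + (-400:ℝ)*W 0*W 2*W 4*W 5^2 + (-40:ℝ)*W 0*W 1*W 5^3) * x
      + ((-2500:ℝ)*W 1*W 2*W 3*W 4*W 5 + (500:ℝ)*W 1*W 2^2*W 5^2 + (625:ℝ)*W 1^2*W 4^2*W 5 + (500:ℝ)*W 0*W 3^2*W 4*W 5 + (-100:ℝ)*W 0*W 2*W 3*W 5^2 + (-50:ℝ)*W 0*W 1*W 4*W 5^2 + (1:ℝ)*W 0^2*W 5^3) = 0 := by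
    linear_combination ((500:ℝ)*W 3^2*W 4*W 5 + (-100:ℝ)*W 2*W 3*W 5^2 + (-25:ℝ)*W 1*W 4*W 5^2 + (1:ℝ)*W 0*W 5^3 + (-50:ℝ)*y^2*W 3*W 4*W 5^2 + (10:ℝ)*y^2*W 2*W 5^3 + (2000:ℝ)*x*W 3*W 4^2*W 5 + (200:ℝ)*x*W 3^2*W 5^2 + (-300:ℝ)*x*W 2*W 4*W 5^2 + (-20:ℝ)*x*W 1*W 5^3 + (-100:ℝ)*x*y^2*W 4^2*W 5^2 + (-20:ℝ)*x*y^2*W 3*W 5^3 + (2000:ℝ)*x^2*W 4^3*W 5 + (1950:ℝ)*x^2*W 3*W 4*W 5^2 + (-190:ℝ)*x^2*W 2*W 5^3 + (-120:ℝ)*x^2*y^2*W 4*W 5^3 + (3300:ℝ)*x^3*W 4^2*W 5^2 + (460:ℝ)*x^3*W 3*W 5^3 + (-40:ℝ)*x^3*y^2*W 5^4 + (1880:ℝ)*x^4*W 4*W 5^3 + (376:ℝ)*x^5*W 5^4) * hR + ((-500:ℝ)*W 2*W 3*W 4*W 5 + (100:ℝ)*W 2^2*W 5^2 + (125:ℝ)*W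 1*W 4^2*W 5 + (-5:ℝ)*W 0*W 4*W 5^2 + (250:ℝ)*y^2*W 3*W 4^2*W 5 + (-50:ℝ)*y^2*W 2*W 4*W 5^2 + (-1500:ℝ)*x*W 3^2*W 4*W 5 + (-500:ℝ)*x*W 2*W 4^2*W 5 + (100:ℝ)*x*W 2*W 3*W 5^2 + (225:ℝ)*x*W 1*W 4*W 5^2 + (-5:ℝ)*x*W 0*W 5^3 + (500:ℝ)*x*y^2*W 4^3*W 5 + (350:ℝ)*x*y^2*W 3*W 4*W 5^2 + (-50:ℝ)*x*y^2*W 2*W 5^3 + (-3750:ℝ)*x^2*W 3*W 4^2*W 5 + (-600:ℝ)*x^2*W 3^2*W 5^2 + (50:ℝ)*x^2*W 2*W 4*W 5^2 + (100:ℝ)*x^2*W 1*W 5^3 + (1100:ℝ)*x^2*y^2*W 4^2*W 5^2 + (100:ℝ)*x^2*y^2*W 3*W 5^3 + (-2500:ℝ)*x^3*W 4^3*W 5 + (-3250:ℝ)*x^3*W 3*W 4*W 5^2 + (150:ℝ)*x^3*W 2*W 5^3 + (800:ℝ)*x^3*y^2*W 4*W 5^3 + (-3500:ℝ)*x^4*W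 4^2*W 5^2 + (-700:ℝ)*x^4*W 3*W 5^3 + (200:ℝ)*x^4*y^2*W 5^4 + (-1680:ℝ)*x^5*W 4*W 5^3 + (-280:ℝ)*x^6*W 5^4) * hI2
  have c10 : ((-1024:ℝ)*W 5^5) < 0 := by
    linarith [pow_pos p5 5]
  have t10 : ((-1024:ℝ)*W 5^5) * x^10 ≤ 0 :=
    mul_nonpos_of_nonpos_of_nonneg c10.le (by positivity)
  have c9 : ((-10240:ℝ)*W 4*W 5^4) < 0 := by
    linarith [mul_pos p4 (pow_pos p5 4)]
  have t9 : ((-10240:ℝ)*W 4*W 5^4) * x^9 ≤ 0 :=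
    mul_nonpos_of_nonpos_of_nonneg c9.le (by positivity)
  have c8 : ((-38400:ℝ)*W 4^2*W 5^3 + (-7680:ℝ)*W 3*W 5^4) < 0 := by
    linarith [mul_pos (pow_pos p4 2) (pow_pos p5 3), mul_pos p3 (pow_pos p5 4)]
  have t8 : ((-38400:ℝ)*W 4^2*W 5^3 + (-7680:ℝ)*W 3*W 5^4) * x^8 ≤ 0 :=
    mul_nonpos_of_nonpos_of_nonneg c8.le (by positivity)
  have c7 : ((-64000:ℝ)*W 4^3*W 5^2 + (-57600:ℝ)*W 3*W 4*W 5^3 + (-1280:ℝ)*W 2*W 5^4) < 0 := by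
    linarith [mul_pos (pow_pos p4 3) (pow_pos p5 2), mul_pos (mul_pos p3 p4) (pow_pos p5 3), mul_pos p2 (pow_pos p5 4)]
  have t7 : ((-64000:ℝ)*W 4^3*W 5^2 + (-57600:ℝ)*W 3*W 4*W 5^3 + (-1280:ℝ)*W 2*W 5^4) * x^7 ≤ 0 :=
    mul_nonpos_of_nonpos_of_nonneg c7.le (by positivity)
  have c6 : ((-40000:ℝ)*W 4^4*W 5 + (-144000:ℝ)*W 3*W 4^2*W 5^2 + (-19200:ℝ)*W 3^2*W 5^3 + (-12800:ℝ)*W 2*W 4*W 5^3 + (960:ℝ)*W 1*W 5^4) < 0 := by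
    linarith [mul_le_mul_of_nonneg_right d15 (pow_pos p5 3).le, mul_pos (mul_pos p2 p4) (pow_pos p5 3), mul_pos (pow_pos p4 4) p5, mul_pos (mul_pos p3 (pow_pos p4 2)) (pow_pos p5 2), mul_pos (pow_pos p3 2) (pow_pos p5 3)]
  have t6 : ((-40000:ℝ)*W 4^4*W 5 + (-144000:ℝ)*W 3*W 4^2*W 5^2 + (-19200:ℝ)*W 3^2*W 5^3 + (-12800:ℝ)*W 2*W 4*W 5^3 + (960:ℝ)*W 1*W 5^4) * x^6 ≤ 0 :=
    mul_nonpos_of_nonpos_of_nonneg c6.le (by positivity)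
  have c5 : ((-120000:ℝ)*W 3*W 4^3*W 5 + (-96000:ℝ)*W 3^2*W 4*W 5^2 + (-40000:ℝ)*W 2*W 4^2*W 5^2 + (-6400:ℝ)*W 2*W 3*W 5^3 + (4000:ℝ)*W 1*W 4*W 5^3 + (352:ℝ)*W 0*W 5^4) < 0 := by
    linarith [mul_le_mul_of_nonneg_right d14 (pow_pos p5 3).le, mul_le_mul_of_nonneg_right d0523 (pow_pos p5 3).le, mul_pos (mul_pos p2 p3) (pow_pos p5 3), mul_pos (mul_pos p3 (pow_pos p4 3)) p5, mul_pos (mul_pos (pow_pos p3 2) p4) (pow_pos p5 2), mul_pos (mul_pos p2 (pow_pos p4 2)) (pow_pos p5 2)]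
  have t5 : ((-120000:ℝ)*W 3*W 4^3*W 5 + (-96000:ℝ)*W 3^2*W 4*W 5^2 + (-40000:ℝ)*W 2*W 4^2*W 5^2 + (-6400:ℝ)*W 2*W 3*W 5^3 + (4000:ℝ)*W 1*W 4*W 5^3 + (352:ℝ)*W 0*W 5^4) * x^5 ≤ 0 :=
    mul_nonpos_of_nonpos_of_nonneg c5.le (by positivity)
  have c4 : ((-120000:ℝ)*W 3^2*W 4^2*W 5 + (-16000:ℝ)*W 3^3*W 5^2 + (-40000:ℝ)*W 2*W 4^3*W 5 + (-48000:ℝ)*W 2*W 3*W 4*W 5^2 + (1600:ℝ)*W 2^2*W 5^3 + (4000:ℝ)*W 1*W 4^2*W 5^2 + (1600:ℝ)*W 1*W 3*W 5^3 + (1760:ℝ)*W 0*W 4*W 5^3) < 0 := by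
    linarith [mul_le_mul_of_nonneg_right d25 (mul_pos p2 (pow_pos p5 2)).le, mul_le_mul_of_nonneg_right d14 (mul_pos p4 (pow_pos p5 2)).le, mul_le_mul_of_nonneg_right d15 (mul_pos p3 (pow_pos p5 2)).le, mul_le_mul_of_nonneg_right d0523 (mul_pos p4 (pow_pos p5 2)).le, mul_pos (mul_pos (mul_pos p2 p3) p4) (pow_pos p5 2), mul_pos (mul_pos (pow_pos p3 2) (pow_pos p4 2)) p5, mul_pos (pow_pos p3 3) (pow_pos p5 2), mul_pos (mul_pos p2 (pow_pos p4 3)) p5]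
  have t4 : ((-120000:ℝ)*W 3^2*W 4^2*W 5 + (-16000:ℝ)*W 3^3*W 5^2 + (-40000:ℝ)*W 2*W 4^3*W 5 + (-48000:ℝ)*W 2*W 3*W 4*W 5^2 + (1600:ℝ)*W 2^2*W 5^3 + (4000:ℝ)*W 1*W 4^2*W 5^2 + (1600:ℝ)*W 1*W 3*W 5^3 + (1760:ℝ)*W 0*W 4*W 5^3) * x^4 ≤ 0 :=
    mul_nonpos_of_nonpos_of_nonneg c4.le (by positivity)
  have c3 : ((-40000:ℝ)*W 3^3*W 4*W 5 + (-80000:ℝ)*W 2*W 3*W 4^2*W 5 + (-8000:ℝ)*W 2*W 3^2*W 5^2 + (1600:ℝ)*W 1*W 2*W 5^3 + (3200:ℝ)*W 0*W 4^2*W 5^2 + (320:ℝ)*W 0*W 3*W 5^3) < 0 := by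
    linarith [mul_le_mul_of_nonneg_right (mul_le_mul d15 d25 (by positivity) (by positivity)) p5.le, mul_le_mul_of_nonneg_right d0523 (mul_pos (pow_pos p4 2) p5).le, mul_le_mul_of_nonneg_right (mul_le_mul d05 l4' (by positivity) (by positivity)) p5.le, mul_le_mul_of_nonneg_right d14 (mul_pos (pow_pos p4 2) p5).le, mul_pos (mul_pos (mul_pos p2 p3) (pow_pos p4 2)) p5, mul_pos (mul_pos (pow_pos p3 3) p4) p5, mul_pos (mul_pos p2 (pow_pos p3 2)) (pow_pos p5 2)]
  have t3 : ((-40000:ℝ)*W 3^3*W 4*W 5 + (-80000:ℝ)*W 2*W 3*W 4^2*W 5 + (-8000:ℝ)*W 2*W 3^2*W 5^2 + (1600:ℝ)*W 1*W 2*W 5^3 + (3200:ℝ)*W 0*W 4^2*W 5^2 + (320:ℝ)*W 0*W 3*W 5^3) * x^3 ≤ 0 :=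
    mul_nonpos_of_nonpos_of_nonneg c3.le (by positivity)
  have c2 : ((-40000:ℝ)*W 2*W 3^2*W 4*W 5 + (-10000:ℝ)*W 2^2*W 4^2*W 5 + (4000:ℝ)*W 2^2*W 3*W 5^2 + (-5000:ℝ)*W 1*W 3*W 4^2*W 5 + (-2000:ℝ)*W 1*W 3^2*W 5^2 + (3000:ℝ)*W 1*W 2*W 4*W 5^2 + (400:ℝ)*W 1^2*W 5^3 + (2000:ℝ)*W 0*W 4^3*W 5 + (1800:ℝ)*W 0*W 3*W 4*W 5^2 + (-280:ℝ)*W 0*W 2*W 5^3) < 0 := by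
    linarith [mul_le_mul_of_nonneg_right d25 (mul_pos (mul_pos p2 p3) p5).le, mul_le_mul_of_nonneg_right d25 (mul_pos (mul_pos p1 p4) p5).le, mul_le_mul_of_nonneg_right (mul_le_mul d15 d15 (by positivity) (by positivity)) p5.le, mul_le_mul_of_nonneg_right d04 (mul_pos (pow_pos p4 2) p5).le, mul_le_mul_of_nonneg_right d0523 (mul_pos (mul_pos p3 p4) p5).le, mul_pos (mul_pos (mul_pos p2 (pow_pos p3 2)) p4) p5, mul_pos (mul_pos (mul_pos p1 p3) (pow_pos p4 2)) p5, mul_pos (mul_pos (pow_pos p2 2) (pow_pos p4 2)) p5, mul_pos (mul_pos p1 (pow_pos p3 2)) (pow_pos p5 2), mul_pos (mul_pos p0 p2) (pow_pos p5 3)]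
  have t2 : ((-40000:ℝ)*W 2*W 3^2*W 4*W 5 + (-10000:ℝ)*W 2^2*W 4^2*W 5 + (4000:ℝ)*W 2^2*W 3*W 5^2 + (-5000:ℝ)*W 1*W 3*W 4^2*W 5 + (-2000:ℝ)*W 1*W 3^2*W 5^2 + (3000:ℝ)*W 1*W 2*W 4*W 5^2 + (400:ℝ)*W 1^2*W 5^3 + (2000:ℝ)*W 0*W 4^3*W 5 + (1800:ℝ)*W 0*W 3*W 4*W 5^2 + (-280:ℝ)*W 0*W 2*W 5^3) * x^2 ≤ 0 :=
    mul_nonpos_of_nonpos_of_nonneg c2.le (by positivity)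
  have c1 : ((-10000:ℝ)*W 2^2*W 3*W 4*W 5 + (2000:ℝ)*W 2^3*W 5^2 + (-5000:ℝ)*W 1*W 3^2*W 4*W 5 + (1000:ℝ)*W 1^2*W 4*W 5^2 + (2000:ℝ)*W 0*W 3*W 4^2*W 5 + (200:ℝ)*W 0*W 3^2*W 5^2 + (-400:ℝ)*W 0*W 2*W 4*W 5^2 + (-40:ℝ)*W 0*W 1*W 5^3) < 0 := by
    linarith [mul_le_mul_of_nonneg_right d25 (mul_pos (pow_pos p2 2) p5).le, mul_le_mul_of_nonneg_right d15 (mul_pos (mul_pos p1 p4) p5).le, mul_le_mul_of_nonneg_right l3' (mul_pos (mul_pos p1 p4) p5).le, mul_le_mul_of_nonneg_right d04 (mul_pos (mul_pos p3 p4) p5).le, mul_le_mul_of_nonneg_right d05 (mul_pos (pow_pos p3 2) p5).le, mul_pos (mul_pos (mul_pos (pow_pos p2 2) p3) p4) p5, mul_pos (mul_pos (mul_pos p1 (pow_pos p3 2)) p4) p5, mul_pos (mul_pos (mul_pos p0 p2) p4) (pow_pos p5 2), mul_pos (mul_pos p0 p1) (pow_pos p5 3)]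
  have t1 : ((-10000:ℝ)*W 2^2*W 3*W 4*W 5 + (2000:ℝ)*W 2^3*W 5^2 + (-5000:ℝ)*W 1*W 3^2*W 4*W 5 + (1000:ℝ)*W 1^2*W 4*W 5^2 + (2000:ℝ)*W 0*W 3*W 4^2*W 5 + (200:ℝ)*W 0*W 3^2*W 5^2 + (-400:ℝ)*W 0*W 2*W 4*W 5^2 + (-40:ℝ)*W 0*W 1*W 5^3) * x ≤ 0 :=
    mul_nonpos_of_nonpos_of_nonneg c1.le hcon
  have c0 : ((-2500:ℝ)*W 1*W 2*W 3*W 4*W 5 + (500:ℝ)*W 1*W 2^2*W 5^2 + (625:ℝ)*W 1^2*W 4^2*W 5 + (500:ℝ)*W 0*W 3^2*W 4*W 5 + (-100:ℝ)*W 0*W 2*W 3*W 5^2 + (-50:ℝ)*W 0*W 1*W 4*W 5^2 + (1:ℝ)*W 0^2*W 5^3) < 0 := by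
    linarith [mul_le_mul_of_nonneg_right d25 (mul_pos (mul_pos p1 p2) p5).le, mul_le_mul_of_nonneg_right d14 (mul_pos (mul_pos p1 p4) p5).le, mul_le_mul_of_nonneg_right d03 (mul_pos (mul_pos p3 p4) p5).le, mul_le_mul_of_nonneg_right (mul_le_mul d05 d0523 (by positivity) (by positivity)) p5.le, mul_pos (mul_pos (mul_pos (mul_pos p1 p2) p3) p4) p5, mul_pos (mul_pos (mul_pos p0 p2) p3) (pow_pos p5 2), mul_pos (mul_pos (mul_pos p0 p1) p4) (pow_pos p5 2)]
  linarith [hF, t10, t9, t8, t7, t6, t5, t4, t3, t2, t1, c0]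

set_option maxHeartbeats 1000000 in
/-- For `1 ≤ n ≤ 5` and strictly positive reals `W 0, …, W n`
satisfying the log-concavity relations `W i ^ 2 ≥ W (i-1) * W (i+1)` for `1 ≤ i ≤ n−1`,
the polynomial `∑_{i=0}^n C(n,i) W i s^i` is a Hurwitz polynomial: every complex root
has strictly negative real part. -/
theorem steiner_polynomial_hurwitz_of_dim_le_five
    (n : ℕ) (hn1 : 1 ≤ n) (hn5 : n ≤ 5)
    (W : ℕ → ℝ) (hpos : ∀ i ≤ n, 0 < W i)
    (hlc : ∀ i : ℕ, 1 ≤ i → i + 1 ≤ n → W (i - 1) * W (i + 1) ≤ W i ^ 2) :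
    ∀ γ : ℂ, (∑ i ∈ Finset.range (n + 1), (n.choose i : ℂ) * (W i : ℂ) * γ ^ i) = 0 →
      γ.re < 0 := by
  intro γ hroot
  by_contra hcon
  push_neg at hcon
  interval_cases n
  -- case n = 1
  · have p0 := hpos 0 (by norm_num)
    have p1 := hpos 1 (by norm_num)
    simp only [Finset.sum_range_succ, Finset.sum_range_zero, zero_add,
      show (1:ℕ).choose 0 = 1 from rfl, show (1:ℕ).choose 1 = 1 from rfl] at hroot
    push_cast at hroot
    rw [Complex.ext_iff] at hroot
    obtain ⟨hR, hI⟩ := hroot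
    simp only [Complex.add_re, Complex.add_im, Complex.mul_re, Complex.mul_im,
      Complex.ofReal_re, Complex.ofReal_im, Complex.re_ofNat, Complex.im_ofNat,
      Complex.one_re, Complex.one_im, Complex.zero_re, Complex.zero_im, pow_one, pow_zero,
      mul_zero, zero_mul, sub_zero, zero_sub, add_zero, zero_add, mul_one, neg_zero] at hR hI
    set x := γ.re with hxdef
    set y := γ.im with hydef
    nlinarith [hR, mul_nonneg p1.le hcon]
  -- case n = 2
  · have p0 := hpos 0 (by norm_num)
    have p1 := hpos 1 (by norm_num)
    have p2 := hpos 2 (by norm_num)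
    have l1 : W 0 * W 2 ≤ W 1 ^ 2 := by simpa using hlc 1 (by norm_num) (by norm_num)
    simp only [Finset.sum_range_succ, Finset.sum_range_zero, zero_add,
      show (2:ℕ).choose 0 = 1 from rfl, show (2:ℕ).choose 1 = 2 from rfl, show (2:ℕ).choose 2 = 1 from rfl] at hroot
    push_cast at hroot
    rw [show γ^2 = γ*γ by ring] at hroot
    rw [Complex.ext_iff] at hroot
    obtain ⟨hR, hI⟩ := hroot
    simp only [Complex.add_re, Complex.add_im, Complex.mul_re, Complex.mul_im,
      Complex.ofReal_re, Complex.ofReal_im, Complex.re_ofNat, Complex.im_ofNat,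
      Complex.one_re, Complex.one_im, Complex.zero_re, Complex.zero_im, pow_one, pow_zero,
      mul_zero, zero_mul, sub_zero, zero_sub, add_zero, zero_add, mul_one, neg_zero] at hR hI
    set x := γ.re with hxdef
    set y := γ.im with hydef
    have hRc : ((1:ℝ)*W 0 + (-1:ℝ)*y^2*W 2 + (2:ℝ)*x*W 1 + (1:ℝ)*x^2*W 2) = 0 := by linear_combination hR
    have hIc : y * ((2:ℝ)*W 1 + (2:ℝ)*x*W 2) = 0 := by linear_combination hI
    clear hR hI
    rcases eq_or_ne y 0 with hy | hy
    · rw [hy] at hRc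
      nlinarith [hRc, mul_nonneg p1.le hcon, mul_nonneg (mul_nonneg p2.le hcon) hcon]
    · have hI2 : ((2:ℝ)*W 1 + (2:ℝ)*x*W 2) = 0 := (mul_eq_zero.mp hIc).resolve_left hy
      nlinarith [hI2, p1, mul_nonneg p2.le hcon]
  -- case n = 3
  · have p0 := hpos 0 (by norm_num)
    have p1 := hpos 1 (by norm_num)
    have p2 := hpos 2 (by norm_num)
    have p3 := hpos 3 (by norm_num)
    have l1 : W 0 * W 2 ≤ W 1 ^ 2 := by simpa using hlc 1 (by norm_num) (by norm_num)
    have l2 : W 1 * W 3 ≤ W 2 ^ 2 := by simpa using hlc 2 (by norm_num) (by norm_num)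
    simp only [Finset.sum_range_succ, Finset.sum_range_zero, zero_add,
      show (3:ℕ).choose 0 = 1 from rfl, show (3:ℕ).choose 1 = 3 from rfl, show (3:ℕ).choose 2 = 3 from rfl, show (3:ℕ).choose 3 = 1 from rfl] at hroot
    push_cast at hroot
    rw [show γ^2 = γ*γ by ring, show γ^3 = γ*γ*γ by ring] at hroot
    rw [Complex.ext_iff] at hroot
    obtain ⟨hR, hI⟩ := hroot
    simp only [Complex.add_re, Complex.add_im, Complex.mul_re, Complex.mul_im,
      Complex.ofReal_re, Complex.ofReal_im, Complex.re_ofNat, Complex.im_ofNat,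
      Complex.one_re, Complex.one_im, Complex.zero_re, Complex.zero_im, pow_one, pow_zero,
      mul_zero, zero_mul, sub_zero, zero_sub, add_zero, zero_add, mul_one, neg_zero] at hR hI
    set x := γ.re with hxdef
    set y := γ.im with hydef
    have hRc : ((1:ℝ)*W 0 + (-3:ℝ)*y^2*W 2 + (3:ℝ)*x*W 1 + (-3:ℝ)*x*y^2*W 3 + (3:ℝ)*x^2*W 2 + (1:ℝ)*x^3*W 3) = 0 := by linear_combination hR
    have hIc : y * ((3:ℝ)*W 1 + (-1:ℝ)*y^2*W 3 + (6:ℝ)*x*W 2 + (3:ℝ)*x^2*W 3) = 0 := by linear_combination hI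
    clear hR hI
    rcases eq_or_ne y 0 with hy | hy
    · rw [hy] at hRc
      nlinarith [hRc, mul_nonneg p1.le hcon, mul_nonneg (mul_nonneg p2.le hcon) hcon, mul_nonneg (mul_nonneg (mul_nonneg p3.le hcon) hcon) hcon]
    · exact hurwitz_aux3 W x y p0 p1 p2 p3 l1 l2 hcon hy hRc hIc
  -- case n = 4
  · have p0 := hpos 0 (by norm_num)
    have p1 := hpos 1 (by norm_num)
    have p2 := hpos 2 (by norm_num)
    have p3 := hpos 3 (by norm_num)
    have p4 := hpos 4 (by norm_num)
    have l1 : W 0 * W 2 ≤ W 1 ^ 2 := by simpa using hlc 1 (by norm_num) (by norm_num)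
    have l2 : W 1 * W 3 ≤ W 2 ^ 2 := by simpa using hlc 2 (by norm_num) (by norm_num)
    have l3 : W 2 * W 4 ≤ W 3 ^ 2 := by simpa using hlc 3 (by norm_num) (by norm_num)
    simp only [Finset.sum_range_succ, Finset.sum_range_zero, zero_add,
      show (4:ℕ).choose 0 = 1 from rfl, show (4:ℕ).choose 1 = 4 from rfl, show (4:ℕ).choose 2 = 6 from rfl, show (4:ℕ).choose 3 = 4 from rfl, show (4:ℕ).choose 4 = 1 from rfl] at hroot
    push_cast at hroot
    rw [show γ^2 = γ*γ by ring, show γ^3 = γ*γ*γ by ring, show γ^4 = γ*γ*γ*γ by ring] at hroot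
    rw [Complex.ext_iff] at hroot
    obtain ⟨hR, hI⟩ := hroot
    simp only [Complex.add_re, Complex.add_im, Complex.mul_re, Complex.mul_im,
      Complex.ofReal_re, Complex.ofReal_im, Complex.re_ofNat, Complex.im_ofNat,
      Complex.one_re, Complex.one_im, Complex.zero_re, Complex.zero_im, pow_one, pow_zero,
      mul_zero, zero_mul, sub_zero, zero_sub, add_zero, zero_add, mul_one, neg_zero] at hR hI
    set x := γ.re with hxdef
    set y := γ.im with hydef
    have hRc : ((1:ℝ)*W 0 + (-6:ℝ)*y^2*W 2 + (1:ℝ)*y^4*W 4 + (4:ℝ)*x*W 1 + (-12:ℝ)*x*y^2*W 3 + (6:ℝ)*x^2*W 2 + (-6:ℝ)*x^2*y^2*W 4 + (4:ℝ)*x^3*W 3 + (1:ℝ)*x^4*W 4) = 0 := by linear_combination hR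
    have hIc : y * ((4:ℝ)*W 1 + (-4:ℝ)*y^2*W 3 + (12:ℝ)*x*W 2 + (-4:ℝ)*x*y^2*W 4 + (12:ℝ)*x^2*W 3 + (4:ℝ)*x^3*W 4) = 0 := by linear_combination hI
    clear hR hI
    rcases eq_or_ne y 0 with hy | hy
    · rw [hy] at hRc
      nlinarith [hRc, mul_nonneg p1.le hcon, mul_nonneg (mul_nonneg p2.le hcon) hcon, mul_nonneg (mul_nonneg (mul_nonneg p3.le hcon) hcon) hcon, mul_nonneg (mul_nonneg (mul_nonneg (mul_nonneg p4.le hcon) hcon) hcon) hcon]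
    · exact hurwitz_aux4 W x y p0 p1 p2 p3 p4 l1 l2 l3 hcon hy hRc hIc
  -- case n = 5
  · have p0 := hpos 0 (by norm_num)
    have p1 := hpos 1 (by norm_num)
    have p2 := hpos 2 (by norm_num)
    have p3 := hpos 3 (by norm_num)
    have p4 := hpos 4 (by norm_num)
    have p5 := hpos 5 (by norm_num)
    have l1 : W 0 * W 2 ≤ W 1 ^ 2 := by simpa using hlc 1 (by norm_num) (by norm_num)
    have l2 : W 1 * W 3 ≤ W 2 ^ 2 := by simpa using hlc 2 (by norm_num) (by norm_num)
    have l3 : W 2 * W 4 ≤ W 3 ^ 2 := by simpa using hlc 3 (by norm_num) (by norm_num)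
    have l4 : W 3 * W 5 ≤ W 4 ^ 2 := by simpa using hlc 4 (by norm_num) (by norm_num)
    simp only [Finset.sum_range_succ, Finset.sum_range_zero, zero_add,
      show (5:ℕ).choose 0 = 1 from rfl, show (5:ℕ).choose 1 = 5 from rfl, show (5:ℕ).choose 2 = 10 from rfl, show (5:ℕ).choose 3 = 10 from rfl, show (5:ℕ).choose 4 = 5 from rfl, show (5:ℕ).choose 5 = 1 from rfl] at hroot
    push_cast at hroot
    rw [show γ^2 = γ*γ by ring, show γ^3 = γ*γ*γ by ring, show γ^4 = γ*γ*γ*γ by ring, show γ^5 = γ*γ*γ*γ*γ by ring] at hroot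
    rw [Complex.ext_iff] at hroot
    obtain ⟨hR, hI⟩ := hroot
    simp only [Complex.add_re, Complex.add_im, Complex.mul_re, Complex.mul_im,
      Complex.ofReal_re, Complex.ofReal_im, Complex.re_ofNat, Complex.im_ofNat,
      Complex.one_re, Complex.one_im, Complex.zero_re, Complex.zero_im, pow_one, pow_zero,
      mul_zero, zero_mul, sub_zero, zero_sub, add_zero, zero_add, mul_one, neg_zero] at hR hI
    set x := γ.re with hxdef
    set y := γ.im with hydef
    have hRc : ((1:ℝ)*W 0 + (-10:ℝ)*y^2*W 2 + (5:ℝ)*y^4*W 4 + (5:ℝ)*x*W 1 + (-30:ℝ)*x*y^2*W 3 + (5:ℝ)*x*y^4*W 5 + (10:ℝ)*x^2*W 2 + (-30:ℝ)*x^2*y^2*W 4 + (10:ℝ)*x^3*W 3 + (-10:ℝ)*x^3*y^2*W 5 + (5:ℝ)*x^4*W 4 + (1:ℝ)*x^5*W 5) = 0 := by linear_combination hR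
    have hIc : y * ((5:ℝ)*W 1 + (-10:ℝ)*y^2*W 3 + (1:ℝ)*y^4*W 5 + (20:ℝ)*x*W 2 + (-20:ℝ)*x*y^2*W 4 + (30:ℝ)*x^2*W 3 + (-10:ℝ)*x^2*y^2*W 5 + (20:ℝ)*x^3*W 4 + (5:ℝ)*x^4*W 5) = 0 := by linear_combination hI
    clear hR hI
    rcases eq_or_ne y 0 with hy | hy
    · rw [hy] at hRc
      nlinarith [hRc, mul_nonneg p1.le hcon, mul_nonneg (mul_nonneg p2.le hcon) hcon, mul_nonneg (mul_nonneg (mul_nonneg p3.le hcon) hcon) hcon, mul_nonneg (mul_nonneg (mul_nonneg (mul_nonneg p4.le hcon) hcon) hcon) hcon, mul_nonneg (mul_nonneg (mul_nonneg (mul_nonneg (mul_nonneg p5.le hcon) hcon) hcon) hcon) hcon]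
    · exact hurwitz_aux5 W x y p0 p1 p2 p3 p4 p5 l1 l2 l3 l4 hcon hy hRc hIc
end
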